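/- arXiv:1812.09002 — 4 statements merged into one kernel-verified Lean document; each statement's English description precedes it below -/
import Mathlib

section
/- For every event-labeled gene tree (T;t,σ), the trivial map κ_{(T;t,σ)} is a MUL-reconciliation map from (T;t,σ) to the associated MUL-tree (M(T;t,σ),χ). -/
namespace Phylo

/-- A directed multigraph: `tail e` and `head e` give the endpoints of an arc `e`.
    Multi-arcs are allowed since distinct arcs may have the same endpoints. -/
structure MGraph (V : Type) (E : Type) where
  tail : E → V
  head : E → V

namespace MGraph

variable {V E : Type}

/-- `G.Adj u v` iff there is an arc from `u` to `v`. -/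
def Adj (G : MGraph V E) (u v : V) : Prop :=
  ∃ e : E, G.tail e = u ∧ G.head e = v

/-- `G.Reach u v` iff there is a directed path (possibly a single vertex) from `u` to `v`. -/
def Reach (G : MGraph V E) (u v : V) : Prop :=
  Relation.ReflTransGen G.Adj u v

/-- `G.vle v u` means `v ⪯ u` (i.e. `v` is a descendant of `u`). -/
def vle (G : MGraph V E) (v u : V) : Prop := G.Reach u v

/-- `G.vlt v u` means `v ≺ u` (i.e. `v` is strictly below `u`). -/
def vlt (G : MGraph V E) (v u : V) : Prop := G.Reach u v ∧ v ≠ u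

/-- indegree of a vertex -/
noncomputable def inDeg (G : MGraph V E) (v : V) : ℕ :=
  Nat.card {e : E // G.head e = v}

/-- outdegree of a vertex -/
noncomputable def outDeg (G : MGraph V E) (v : V) : ℕ :=
  Nat.card {e : E // G.tail e = v}

/-- `G` is a DAG. -/
def Acyclic (G : MGraph V E) : Prop :=
  ∀ v : V, ¬ Relation.TransGen G.Adj v v

/-- `G` has no multi-arcs. -/
def MultiArcFree (G : MGraph V E) : Prop :=
  ∀ e f : E, G.tail e = G.tail f → G.head e = G.head f → e = f

/-- A point of `V ∪ E`, where an arc is represented by its head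
    (used for extending `Q`-sets to arcs). -/
def hpt (G : MGraph V E) : V ⊕ E → V
  | Sum.inl v => v
  | Sum.inr e => G.head e

/-- A point of `V ∪ E`, where an arc is represented by its tail
    (used for extending `lca` to arcs). -/
def tpt (G : MGraph V E) : V ⊕ E → V
  | Sum.inl v => v
  | Sum.inr e => G.tail e

/-- The strict order `≺` on `V ∪ E`:
    `x ≺ y` for vertices means `x ⪯ y` and `x ≠ y`;
    a vertex `x ≺` an arc `e = (u,v)` iff `x ⪯ v`;
    an arc `e = (u,v) ≺` a vertex `x` iff `u ⪯ x`;
    for arcs `e = (u,v)` and `f = (a,b)`: `e ≺ f` iff `v ≺ u ⪯ b ≺ a`. -/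
def slt (G : MGraph V E) : V ⊕ E → V ⊕ E → Prop
  | Sum.inl x, Sum.inl y => G.vlt x y
  | Sum.inl x, Sum.inr e => G.vle x (G.head e)
  | Sum.inr e, Sum.inl x => G.vle (G.tail e) x
  | Sum.inr e, Sum.inr f =>
      G.vlt (G.head e) (G.tail e) ∧ G.vle (G.tail e) (G.head f) ∧
        G.vlt (G.head f) (G.tail f)

/-- The (non-strict) order `⪯` on `V ∪ E`. -/
def sle (G : MGraph V E) (a b : V ⊕ E) : Prop := a = b ∨ G.slt a b

/-- `Q_N(x,y)`: the set of vertices `z` admitting directed paths from `z` to `x`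
    and from `z` to `y` which are separated by `z`, i.e. start with different
    children of `z`. -/
def QSet (G : MGraph V E) (x y : V) : Set V :=
  {z | ∃ c₁ c₂ : V, c₁ ≠ c₂ ∧ G.Adj z c₁ ∧ G.Adj z c₂ ∧ G.Reach c₁ x ∧ G.Reach c₂ y}

/-- `l` is the least common ancestor of the set `A`:
    a `⪯`-minimal common ancestor of all of `A`. -/
def IsLca (G : MGraph V E) (A : Set V) (l : V) : Prop :=
  (∀ a ∈ A, G.Reach l a) ∧ ∀ l' : V, (∀ a ∈ A, G.Reach l' a) → G.Reach l' l

/-- A directed path, given as its (nonempty, repetition-free) list of vertices. -/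
def IsDiPath (G : MGraph V E) (p : List V) : Prop :=
  p ≠ [] ∧ p.Chain' G.Adj ∧ p.Nodup

end MGraph

/-- Event labels for inner vertices of gene trees: speciation or duplication. -/
inductive Event : Type
  | spec : Event
  | dupl : Event
  deriving DecidableEq

variable {V E W F D U S : Type}

/-- `(G, lv, ρ)` is a (rooted phylogenetic) network with leaf set `lv` and root `ρ`:
    (N1) the root has indegree 0 and outdegree 1 and its unique child has
    indegree 1 and outdegree at least 2;
    (N2) the leaves are exactly the vertices of outdegree 0 and indegree 1;
    (N3) every other non-leaf vertex is a tree vertex (indegree 1, outdegree > 1)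
    or a hybrid vertex (indegree > 1, outdegree 1);
    moreover the leaf set has at least two elements and everything is finite. -/
structure IsNetwork (G : MGraph V E) (lv : Set V) (ρ : V) : Prop where
  finV : Finite V
  finE : Finite E
  acyclic : G.Acyclic
  root_in : G.inDeg ρ = 0
  root_out : G.outDeg ρ = 1
  root_child : ∀ c : V, G.Adj ρ c → G.inDeg c = 1 ∧ 2 ≤ G.outDeg c
  leaf_iff : ∀ v : V, v ∈ lv ↔ (G.outDeg v = 0 ∧ G.inDeg v = 1)
  inner_deg : ∀ v : V, v ∉ lv → v ≠ ρ →
      (G.inDeg v = 1 ∧ 2 ≤ G.outDeg v) ∨ (2 ≤ G.inDeg v ∧ G.outDeg v = 1)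
  two_leaves : ∃ a b : V, a ∈ lv ∧ b ∈ lv ∧ a ≠ b

/-- no hybrid vertices -/
def NoHybrid (G : MGraph V E) : Prop := ∀ v : V, G.inDeg v ≤ 1

/-- A (rooted) phylogenetic tree: a multi-arc free network without hybrid vertices. -/
def IsPhyloTree (G : MGraph V E) (lv : Set V) (ρ : V) : Prop :=
  IsNetwork G lv ρ ∧ G.MultiArcFree ∧ NoHybrid G

/-- A network (or tree) "on 𝕊": its leaves are in bijection with the species set `S`
    via the labeling `sp`. -/
structure IsLeafLabeling (G : MGraph V E) (lv : Set V) (sp : S → V) : Prop where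
  inj : Function.Injective sp
  mem : ∀ s : S, sp s ∈ lv
  surj : ∀ v ∈ lv, ∃ s : S, sp s = v

/-- `(G, lv, ρ, σ)` is the underlying structure of an event-labeled gene tree on the
    gene set `lv`: a reduced tree (root of indegree 0 and outdegree ≥ 2, all other
    inner vertices of indegree 1 and outdegree ≥ 2) together with a surjective
    gene-species map `σ` whose image has more than one element. -/
structure IsGeneTree (G : MGraph V E) (lv : Set V) (ρ : V) (σ : V → S) : Prop where
  finV : Finite V
  finE : Finite E
  acyclic : G.Acyclic
  multiarc_free : G.MultiArcFree
  root_in : G.inDeg ρ = 0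
  root_out : 2 ≤ G.outDeg ρ
  leaf_iff : ∀ v : V, v ∈ lv ↔ (G.outDeg v = 0 ∧ G.inDeg v = 1)
  inner_deg : ∀ v : V, v ∉ lv → v ≠ ρ → G.inDeg v = 1 ∧ 2 ≤ G.outDeg v
  sigma_surj : ∀ s : S, ∃ g ∈ lv, σ g = s
  sigma_nontriv : ∃ g g' : V, g ∈ lv ∧ g' ∈ lv ∧ σ g ≠ σ g'

/-- `L_T(x)`: the set of leaves below or equal to `x`. -/
def leavesBelow (G : MGraph V E) (lv : Set V) (x : V) : Set V :=
  {g | g ∈ lv ∧ G.Reach x g}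

/-- A TreeNet-reconciliation map `μ` from the event-labeled gene tree `(T;t,σ)`
    to the network `N` (with species labeling `sp`):
    (R1) leaves are mapped to the species containing them;
    (R2.i) a speciation vertex is mapped to a vertex of `N` separating the images
    of two of its children (i.e. `μ x ∈ Q²`);
    (R2.ii) a duplication vertex is mapped to an arc of `N`;
    (R3) ancestor relations are preserved (strictly, unless both events are
    duplications). -/
structure IsTreeNetRecon (T : MGraph V E) (lvT : Set V) (t : V → Event) (σ : V → S)
    (N : MGraph W F) (sp : S → W) (μ : V → W ⊕ F) : Prop where
  R1 : ∀ x ∈ lvT, μ x = Sum.inl (sp (σ x))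
  R2i : ∀ x : V, x ∉ lvT → t x = Event.spec →
      ∃ w : W, μ x = Sum.inl w ∧ ∃ c₁ c₂ : V, T.Adj x c₁ ∧ T.Adj x c₂ ∧
        w ∈ N.QSet (N.hpt (μ c₁)) (N.hpt (μ c₂))
  R2ii : ∀ x : V, x ∉ lvT → t x = Event.dupl → ∃ e : F, μ x = Sum.inr e
  R3d : ∀ x y : V, T.vlt x y → x ∉ lvT → y ∉ lvT →
      t x = Event.dupl → t y = Event.dupl → N.sle (μ x) (μ y)
  R3s : ∀ x y : V, T.vlt x y →
      ¬ (x ∉ lvT ∧ y ∉ lvT ∧ t x = Event.dupl ∧ t y = Event.dupl) →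
      N.slt (μ x) (μ y)

/-- `(M, lv, ρ, χ)` is a pseudo MUL-tree on the species set `S`:
    a rooted tree (possibly with indegree-1 outdegree-1 vertices) whose root has
    indegree 0 and outdegree 1, together with a labeling `χ` of the leaves by `S`
    with pairwise disjoint nonempty classes covering all leaves. -/
structure IsPMULTree (M : MGraph D U) (lv : Set D) (ρ : D) (χ : S → Set D) : Prop where
  finD : Finite D
  finU : Finite U
  acyclic : M.Acyclic
  root_in : M.inDeg ρ = 0
  root_out : M.outDeg ρ = 1
  leaf_iff : ∀ v : D, v ∈ lv ↔ (M.outDeg v = 0 ∧ M.inDeg v = 1)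
  inner_deg : ∀ v : D, v ∉ lv → v ≠ ρ → M.inDeg v = 1 ∧ 1 ≤ M.outDeg v
  chi_sub : ∀ x : S, χ x ⊆ lv
  chi_ne : ∀ x : S, (χ x).Nonempty
  chi_disj : ∀ x y : S, x ≠ y → Disjoint (χ x) (χ y)
  chi_cover : ∀ l ∈ lv, ∃ x : S, l ∈ χ x
  species_nontriv : ∃ x y : S, x ≠ y

/-- A MUL-tree is a pseudo MUL-tree whose underlying tree is a phylogenetic tree,
    i.e., without indegree-1 outdegree-1 vertices. -/
def IsMULTree (M : MGraph D U) (lv : Set D) (ρ : D) (χ : S → Set D) : Prop :=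
  IsPMULTree M lv ρ χ ∧ ∀ v : D, v ∉ lv → v ≠ ρ → 2 ≤ M.outDeg v

/-- `D¹`: the set of vertices with indegree one and outdegree one. -/
def D1set (M : MGraph D U) : Set D := {v | M.inDeg v = 1 ∧ M.outDeg v = 1}

/-- A MUL-reconciliation map `κ : V → (D∖D¹) ∪ U` from the event-labeled gene tree
    `(T;t,σ)` to the pseudo MUL-tree `(M,χ)`:
    (M1) each leaf maps to a leaf of `M` labeled by its species;
    (M2.i) a speciation vertex maps to an inner vertex of `M` admitting directed
    paths to the images of two distinct children whose first arcs are incomparable;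
    (M2.ii) a duplication vertex maps to an arc;
    (M3) ancestor relations are preserved (strictly, unless both are duplications). -/
structure IsMULRecon (T : MGraph V E) (lvT : Set V) (t : V → Event) (σ : V → S)
    (M : MGraph D U) (lvM : Set D) (χ : S → Set D) (κ : V → D ⊕ U) : Prop where
  M0 : ∀ (x : V) (d : D), κ x = Sum.inl d → d ∉ D1set M
  M1 : ∀ x ∈ lvT, ∃ d : D, κ x = Sum.inl d ∧ d ∈ lvM ∧ d ∈ χ (σ x)
  M2i : ∀ x : V, x ∉ lvT → t x = Event.spec →
      ∃ d : D, κ x = Sum.inl d ∧ d ∉ lvM ∧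
        ∃ c₁ c₂ : V, T.Adj x c₁ ∧ T.Adj x c₂ ∧ c₁ ≠ c₂ ∧
          ∃ a₁ a₂ : U, M.tail a₁ = d ∧ M.tail a₂ = d ∧
            M.Reach (M.head a₁) (M.hpt (κ c₁)) ∧
            M.Reach (M.head a₂) (M.hpt (κ c₂)) ∧
            ¬ M.sle (Sum.inr a₁) (Sum.inr a₂) ∧ ¬ M.sle (Sum.inr a₂) (Sum.inr a₁)
  M2ii : ∀ x : V, x ∉ lvT → t x = Event.dupl → ∃ a : U, κ x = Sum.inr a
  M3d : ∀ x y : V, T.vlt x y → x ∉ lvT → y ∉ lvT →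
      t x = Event.dupl → t y = Event.dupl → M.sle (κ x) (κ y)
  M3s : ∀ x y : V, T.vlt x y →
      ¬ (x ∉ lvT ∧ y ∉ lvT ∧ t x = Event.dupl ∧ t y = Event.dupl) →
      M.slt (κ x) (κ y)

/-- `x` is a species with at least two leaves labeled by it. -/
def MultiSp (χ : S → Set D) (x : S) : Prop :=
  ∃ l₁ l₂ : D, l₁ ∈ χ x ∧ l₂ ∈ χ x ∧ l₁ ≠ l₂

/-- Vertices of the network obtained by folding up (the simple subdivision of) a
    MUL-tree: the inner vertices of the MUL-tree, a leaf for each species, and a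
    hybrid vertex for each species labeling at least two leaves. -/
def FoldV (D S : Type) (lv : Set D) (χ : S → Set D) : Type :=
  {d : D // d ∉ lv} ⊕ (S ⊕ {x : S // MultiSp χ x})

/-- Arcs of the folded-up network: the arcs of the MUL-tree (redirected), plus one
    arc `(par x, x)` for every species `x` labeling at least two leaves. -/
def FoldE (U : Type) {D S : Type} (χ : S → Set D) : Type :=
  U ⊕ {x : S // MultiSp χ x}

open Classical in
/-- The digraph obtained from the simple subdivision of the MUL-tree `(M,χ)` by
    identifying, for each species `x`, all arcs whose head is a leaf in `χ x`
    to a single arc `(par x, x)`. -/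
noncomputable def foldGraph (M : MGraph D U) (lv : Set D) (χ : S → Set D)
    (htail : ∀ e : U, M.tail e ∉ lv)
    (hcov : ∀ d ∈ lv, ∃ x : S, d ∈ χ x) :
    MGraph (FoldV D S lv χ) (FoldE U χ) where
  tail a :=
    match a with
    | Sum.inl e => Sum.inl ⟨M.tail e, htail e⟩
    | Sum.inr x => Sum.inr (Sum.inr x)
  head a :=
    match a with
    | Sum.inl e =>
        if h : M.head e ∈ lv then
          if hm : MultiSp χ (Classical.choose (hcov _ h)) then
            Sum.inr (Sum.inr ⟨Classical.choose (hcov _ h), hm⟩)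
          else Sum.inr (Sum.inl (Classical.choose (hcov _ h)))
        else Sum.inl ⟨M.head e, h⟩
    | Sum.inr x => Sum.inr (Sum.inl x.1)

/-- Leaves of the folded-up network: one for each species. -/
def foldLeaves (lv : Set D) (χ : S → Set D) : Set (FoldV D S lv χ) :=
  Set.range fun x : S => Sum.inr (Sum.inl x)

/-- Species labeling of the folded-up network. -/
def foldSp (lv : Set D) (χ : S → Set D) : S → FoldV D S lv χ :=
  fun x => Sum.inr (Sum.inl x)

/-- Root of the folded-up network. -/
def foldRoot (lv : Set D) (χ : S → Set D) (ρ : D) (hρ : ρ ∉ lv) : FoldV D S lv χ :=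
  Sum.inl ⟨ρ, hρ⟩

/-- The tree `M(T;t,σ)` associated to an event-labeled gene tree: `T` together with
    a new root `Sum.inr ()` and a new arc from it to the old root. -/
def geneMULGraph (T : MGraph V E) (ρT : V) : MGraph (V ⊕ Unit) (E ⊕ Unit) where
  tail a :=
    match a with
    | Sum.inl e => Sum.inl (T.tail e)
    | Sum.inr _ => Sum.inr ()
  head a :=
    match a with
    | Sum.inl e => Sum.inl (T.head e)
    | Sum.inr _ => Sum.inl ρT

/-- Leaves of `M(T;t,σ)`: the genes. -/
def geneMULLeaves (lvT : Set V) : Set (V ⊕ Unit) := Sum.inl '' lvT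

/-- Leaf labeling of `M(T;t,σ)`: `χ x` consists of the genes `g` with `σ g = x`. -/
def geneMULChi (lvT : Set V) (σ : V → S) : S → Set (V ⊕ Unit) :=
  fun x => {d | ∃ g : V, g ∈ lvT ∧ σ g = x ∧ d = Sum.inl g}

theorem geneMUL_tail (T : MGraph V E) (lvT : Set V) (ρT : V)
    (htail : ∀ e : E, T.tail e ∉ lvT) :
    ∀ a : E ⊕ Unit, (geneMULGraph T ρT).tail a ∉ geneMULLeaves lvT := by
  intro a
  cases a with
  | inl e =>
    rintro ⟨g, hg, hEq⟩
    have hg' : g = T.tail e := Sum.inl.inj hEq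
    exact htail e (hg' ▸ hg)
  | inr u =>
    rintro ⟨g, hg, hEq⟩
    exact Sum.inl_ne_inr hEq

theorem geneMUL_cover (lvT : Set V) (σ : V → S) :
    ∀ d ∈ geneMULLeaves lvT, ∃ x : S, d ∈ geneMULChi lvT σ x := by
  rintro d ⟨g, hg, rfl⟩
  exact ⟨σ g, g, hg, rfl, rfl⟩

theorem geneMUL_root_not_leaf (lvT : Set V) :
    (Sum.inr () : V ⊕ Unit) ∉ geneMULLeaves lvT := by
  rintro ⟨g, hg, hEq⟩
  exact Sum.inl_ne_inr hEq

/-- The species network `N` obtained from the simple subdivision of the MUL-tree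
    `(M(T;t,σ),χ)` by identifying, for each species `x`, all arcs whose head is a
    leaf in `χ x` to a single arc `(par x, x)`. -/
noncomputable def geneNetGraph (T : MGraph V E) (lvT : Set V) (ρT : V) (σ : V → S)
    (htail : ∀ e : E, T.tail e ∉ lvT) :
    MGraph (FoldV (V ⊕ Unit) S (geneMULLeaves lvT) (geneMULChi lvT σ))
      (FoldE (E ⊕ Unit) (geneMULChi lvT σ)) :=
  foldGraph (geneMULGraph T ρT) (geneMULLeaves lvT) (geneMULChi lvT σ)
    (geneMUL_tail T lvT ρT htail) (geneMUL_cover lvT σ)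

noncomputable def geneNetLeaves (lvT : Set V) (σ : V → S) :
    Set (FoldV (V ⊕ Unit) S (geneMULLeaves lvT) (geneMULChi lvT σ)) :=
  foldLeaves (geneMULLeaves lvT) (geneMULChi lvT σ)

noncomputable def geneNetSp (lvT : Set V) (σ : V → S) :
    S → FoldV (V ⊕ Unit) S (geneMULLeaves lvT) (geneMULChi lvT σ) :=
  foldSp (geneMULLeaves lvT) (geneMULChi lvT σ)

noncomputable def geneNetRoot (lvT : Set V) (σ : V → S) :
    FoldV (V ⊕ Unit) S (geneMULLeaves lvT) (geneMULChi lvT σ) :=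
  foldRoot (geneMULLeaves lvT) (geneMULChi lvT σ) (Sum.inr ())
    (geneMUL_root_not_leaf lvT)

open Classical in
/-- The trivial map `κ_{(T;t,σ)}` from the gene tree to its associated MUL-tree
    `(M(T;t,σ),χ)`: leaves map to themselves (their species-labeled copies),
    speciation vertices map to themselves, and a duplication vertex maps to its
    unique incoming arc (the newly added root arc, for the old root). -/
noncomputable def trivialKappa (T : MGraph V E) (lvT : Set V) (ρT : V)
    (t : V → Event)
    (hinc : ∀ v : V, v ∉ lvT → v ≠ ρT → ∃ e : E, T.head e = v) (v : V) :
    (V ⊕ Unit) ⊕ (E ⊕ Unit) :=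
  if hL : v ∈ lvT then Sum.inl (Sum.inl v)
  else if t v = Event.spec then Sum.inl (Sum.inl v)
  else if hρ : v = ρT then Sum.inr (Sum.inr ())
  else Sum.inr (Sum.inl (Classical.choose (hinc v hL hρ)))

section Aux

variable {V E S : Type} {T : MGraph V E} {lvT : Set V} {ρT : V} {σ : V → S}

lemma gm_adj_inl {u : V} {w : V ⊕ Unit} (h : (geneMULGraph T ρT).Adj (Sum.inl u) w) :
    ∃ v : V, w = Sum.inl v ∧ T.Adj u v := by
  obtain ⟨a, ht, hh⟩ := h
  cases a with
  | inl e =>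
    exact ⟨T.head e, hh.symm, e, Sum.inl.inj ht, rfl⟩
  | inr _ => exact (Sum.inr_ne_inl ht).elim

lemma gm_adj_lift {u v : V} (h : T.Adj u v) :
    (geneMULGraph T ρT).Adj (Sum.inl u) (Sum.inl v) := by
  obtain ⟨e, h1, h2⟩ := h
  exact ⟨Sum.inl e, congrArg Sum.inl h1, congrArg Sum.inl h2⟩

lemma gm_reach_lift {u v : V} (h : T.Reach u v) :
    (geneMULGraph T ρT).Reach (Sum.inl u) (Sum.inl v) := by
  induction h with
  | refl => exact Relation.ReflTransGen.refl
  | tail _ hbc ih => exact ih.tail (gm_adj_lift hbc)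

lemma gm_reach_proj {u : V} {w : V ⊕ Unit}
    (h : (geneMULGraph T ρT).Reach (Sum.inl u) w) :
    ∃ v : V, w = Sum.inl v ∧ T.Reach u v := by
  induction h with
  | refl => exact ⟨u, rfl, Relation.ReflTransGen.refl⟩
  | tail _ hbc ih =>
    obtain ⟨b', rfl, hub⟩ := ih
    obtain ⟨v, rfl, hadj⟩ := gm_adj_inl hbc
    exact ⟨v, rfl, hub.tail hadj⟩

lemma gm_acyclic (hac : T.Acyclic) : (geneMULGraph T ρT).Acyclic := by
  intro w h
  obtain ⟨b, hwb, hbw⟩ := Relation.TransGen.head'_iff.1 h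
  cases w with
  | inl v =>
    obtain ⟨v', rfl, hadj⟩ := gm_adj_inl hwb
    obtain ⟨v'', hv, hr⟩ := gm_reach_proj (T := T) (ρT := ρT) hbw
    have : v'' = v := Sum.inl.inj hv.symm ▸ rfl
    exact hac v (Relation.TransGen.head' hadj (Sum.inl.inj hv ▸ hr))
  | inr u =>
    obtain ⟨a, ht, hh⟩ := hwb
    cases a with
    | inl e => exact Sum.inl_ne_inr ht
    | inr _ =>
      have hb : b = Sum.inl ρT := hh.symm
      subst hb
      obtain ⟨v, hv, _⟩ := gm_reach_proj (T := T) (ρT := ρT) hbw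
      exact Sum.inr_ne_inl hv

lemma gm_outDeg (v : V) :
    (geneMULGraph T ρT).outDeg (Sum.inl v) = T.outDeg v := by
  apply Nat.card_congr
  exact
    { toFun := fun a =>
        match a with
        | ⟨Sum.inl e, h⟩ => ⟨e, Sum.inl.inj h⟩
        | ⟨Sum.inr u, h⟩ => (Sum.inr_ne_inl h).elim
      invFun := fun e => ⟨Sum.inl e.1, congrArg Sum.inl e.2⟩
      left_inv := by
        rintro ⟨a, h⟩
        cases a with
        | inl e => rfl
        | inr u => exact (Sum.inr_ne_inl h).elim
      right_inv := fun e => rfl }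

lemma no_head_root (hT : IsGeneTree T lvT ρT σ) (e : E) : T.head e ≠ ρT := by
  intro h
  have : Finite E := hT.finE
  have hpos : 0 < Nat.card {e : E // T.head e = ρT} :=
    @Nat.card_pos _ ⟨⟨e, h⟩⟩ _
  have h0 : T.inDeg ρT = 0 := hT.root_in
  rw [MGraph.inDeg] at h0
  omega

lemma leaf_no_tail (hT : IsGeneTree T lvT ρT σ) {v : V} (hv : v ∈ lvT) (e : E) :
    T.tail e ≠ v := by
  intro h
  have : Finite E := hT.finE
  have hpos : 0 < Nat.card {e : E // T.tail e = v} :=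
    @Nat.card_pos _ ⟨⟨e, h⟩⟩ _
  have h0 : T.outDeg v = 0 := ((hT.leaf_iff v).1 hv).1
  rw [MGraph.outDeg] at h0
  omega

lemma unique_incoming (hT : IsGeneTree T lvT ρT σ) {x : V} (hL : x ∉ lvT) (hρ : x ≠ ρT)
    {e f : E} (he : T.head e = x) (hf : T.head f = x) : e = f := by
  have h1 : T.inDeg x = 1 := (hT.inner_deg x hL hρ).1
  rw [MGraph.inDeg] at h1
  have hs : Subsingleton {e : E // T.head e = x} :=
    (Nat.card_eq_one_iff_unique.1 h1).1
  have := hs.allEq ⟨e, he⟩ ⟨f, hf⟩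
  exact congrArg Subtype.val this

lemma not_leaf_of_vlt (hT : IsGeneTree T lvT ρT σ) {x y : V} (h : T.vlt x y) :
    y ∉ lvT := by
  intro hy
  obtain ⟨hr, hne⟩ := h
  rcases Relation.ReflTransGen.cases_head hr with heq | ⟨c, hadj, _⟩
  · exact hne heq.symm
  · obtain ⟨e, ht, _⟩ := hadj
    exact leaf_no_tail hT hy e ht

lemma ne_root_of_vlt (hT : IsGeneTree T lvT ρT σ) {x y : V} (h : T.vlt x y) :
    x ≠ ρT := by
  intro hx
  obtain ⟨hr, hne⟩ := h
  rcases Relation.ReflTransGen.cases_tail hr with heq | ⟨c, _, hadj⟩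
  · exact hne heq
  · obtain ⟨e, _, hh⟩ := hadj
    exact no_head_root hT e (hx ▸ hh)

lemma two_out (hT : IsGeneTree T lvT ρT σ) {x : V} (hL : x ∉ lvT) :
    ∃ e₁ e₂ : E, e₁ ≠ e₂ ∧ T.tail e₁ = x ∧ T.tail e₂ = x := by
  have h2 : 2 ≤ T.outDeg x := by
    by_cases hρ : x = ρT
    · exact hρ ▸ hT.root_out
    · exact (hT.inner_deg x hL hρ).2
  rw [MGraph.outDeg] at h2
  have : Finite E := hT.finE
  have : Nontrivial {e : E // T.tail e = x} :=
    Finite.one_lt_card_iff_nontrivial.1 (by omega)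
  obtain ⟨⟨e₁, h₁⟩, ⟨e₂, h₂⟩, hne⟩ := this.exists_pair_ne
  exact ⟨e₁, e₂, fun h => hne (Subtype.ext h), h₁, h₂⟩

end Aux

lemma reach_tail_of_head {V E S : Type} {T : MGraph V E} {lvT : Set V} {ρT : V} {σ : V → S}
    (hT : IsGeneTree T lvT ρT σ) {x y : V} (hr : T.Reach y x) (hne : x ≠ y)
    (hL : x ∉ lvT) {e : E} (he : T.head e = x) : T.Reach y (T.tail e) := by
  have hxρ : x ≠ ρT := fun h => no_head_root hT e (h ▸ he)
  rcases Relation.ReflTransGen.cases_tail hr with heq | ⟨c, hyc, hadj⟩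
  · exact absurd heq hne
  · obtain ⟨f, htf, hhf⟩ := hadj
    have hef : f = e := unique_incoming hT hL hxρ hhf he
    subst hef
    rw [htf]
    exact hyc


/-- For every event-labeled gene tree `(T;t,σ)`, the trivial map
    `κ_{(T;t,σ)}` is a MUL-reconciliation map from `(T;t,σ)` to the associated
    MUL-tree `(M(T;t,σ),χ)`. -/
theorem trivial_map_is_mul_recon {V E S : Type}
    (T : MGraph V E) (lvT : Set V) (ρT : V) (t : V → Event) (σ : V → S)
    (hT : IsGeneTree T lvT ρT σ)
    (hinc : ∀ v : V, v ∉ lvT → v ≠ ρT → ∃ e : E, T.head e = v) :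
    IsMULRecon T lvT t σ (geneMULGraph T ρT) (geneMULLeaves lvT)
      (geneMULChi lvT σ) (trivialKappa T lvT ρT t hinc) := by
  classical
  have hκleaf : ∀ x ∈ lvT, trivialKappa T lvT ρT t hinc x = Sum.inl (Sum.inl x) :=
    fun x hx => dif_pos hx
  have hκspec : ∀ x, x ∉ lvT → t x = Event.spec →
      trivialKappa T lvT ρT t hinc x = Sum.inl (Sum.inl x) := by
    intro x h hs
    rw [trivialKappa, dif_neg h, if_pos hs]
  have hκroot : ∀ h : ρT ∉ lvT, t ρT ≠ Event.spec →
      trivialKappa T lvT ρT t hinc ρT = Sum.inr (Sum.inr ()) := by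
    intro h hs
    rw [trivialKappa, dif_neg h, if_neg hs, dif_pos rfl]
  have hκdup : ∀ x, ∀ h : x ∉ lvT, t x ≠ Event.spec → ∀ hρ : x ≠ ρT,
      ∃ e : E, trivialKappa T lvT ρT t hinc x = Sum.inr (Sum.inl e) ∧ T.head e = x := by
    intro x h hs hρ
    refine ⟨Classical.choose (hinc x h hρ), ?_, Classical.choose_spec (hinc x h hρ)⟩
    rw [trivialKappa, dif_neg h, if_neg hs, dif_neg hρ]
  have hhpt : ∀ c, c ≠ ρT →
      (geneMULGraph T ρT).hpt (trivialKappa T lvT ρT t hinc c) = Sum.inl c := by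
    intro c hρ
    by_cases hL : c ∈ lvT
    · rw [hκleaf c hL]; rfl
    by_cases hs : t c = Event.spec
    · rw [hκspec c hL hs]; rfl
    · obtain ⟨e, hke, hhe⟩ := hκdup c hL hs hρ
      rw [hke]
      show Sum.inl (T.head e) = Sum.inl c
      exact congrArg Sum.inl hhe
  have hdne : ∀ {z : V}, t z = Event.dupl → t z ≠ Event.spec := by
    intro z h hs
    rw [h] at hs
    exact Event.noConfusion hs
  -- arcs assigned to non-leaf duplication vertices
  have harc : ∀ z, z ∉ lvT → t z ≠ Event.spec →
      ∃ a : E ⊕ Unit, trivialKappa T lvT ρT t hinc z = Sum.inr a ∧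
        (geneMULGraph T ρT).head a = Sum.inl z ∧
        (geneMULGraph T ρT).vlt ((geneMULGraph T ρT).head a)
          ((geneMULGraph T ρT).tail a) := by
    intro z hL hs
    by_cases hρ : z = ρT
    · subst hρ
      refine ⟨Sum.inr (), hκroot hL hs, rfl, ?_, ?_⟩
      · exact Relation.ReflTransGen.single ⟨Sum.inr (), rfl, rfl⟩
      · intro h
        exact Sum.inl_ne_inr h
    · obtain ⟨e, hke, hhe⟩ := hκdup z hL hs hρ
      refine ⟨Sum.inl e, hke, congrArg Sum.inl hhe, ?_, ?_⟩
      · exact Relation.ReflTransGen.single ⟨Sum.inl e, rfl, rfl⟩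
      · intro h
        have hte : T.head e = T.tail e := Sum.inl.inj h
        exact hT.acyclic z (Relation.TransGen.single ⟨e, by rw [← hte]; exact hhe, hhe⟩)
  -- the key lemma: κ strictly preserves the order
  have key : ∀ x y : V, T.vlt x y →
      (geneMULGraph T ρT).slt (trivialKappa T lvT ρT t hinc x)
        (trivialKappa T lvT ρT t hinc y) := by
    intro x y hxy
    obtain ⟨hr, hne⟩ := hxy
    have hyL : y ∉ lvT := not_leaf_of_vlt hT ⟨hr, hne⟩
    have hxρ : x ≠ ρT := ne_root_of_vlt hT ⟨hr, hne⟩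
    have hxform : trivialKappa T lvT ρT t hinc x = Sum.inl (Sum.inl x) ∨
        ∃ e : E, trivialKappa T lvT ρT t hinc x = Sum.inr (Sum.inl e) ∧ T.head e = x := by
      by_cases hL : x ∈ lvT
      · exact Or.inl (hκleaf x hL)
      by_cases hs : t x = Event.spec
      · exact Or.inl (hκspec x hL hs)
      · exact Or.inr (hκdup x hL hs hxρ)
    by_cases hys : t y = Event.spec
    · rw [hκspec y hyL hys]
      rcases hxform with hxf | ⟨e, hke, hhe⟩
      · rw [hxf]
        show (geneMULGraph T ρT).vlt (Sum.inl x) (Sum.inl y)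
        exact ⟨gm_reach_lift hr, fun h => hne (Sum.inl.inj h)⟩
      · rw [hke]
        show (geneMULGraph T ρT).Reach (Sum.inl y) (Sum.inl (T.tail e))
        have hxL : x ∉ lvT := by
          intro hL
          rw [hκleaf x hL] at hke
          exact Sum.inl_ne_inr hke
        exact gm_reach_lift (reach_tail_of_head hT hr hne hxL hhe)
    · obtain ⟨a, hka, hha, hvlt⟩ := harc y hyL hys
      rw [hka]
      rcases hxform with hxf | ⟨e, hke, hhe⟩
      · rw [hxf]
        show (geneMULGraph T ρT).Reach ((geneMULGraph T ρT).head a) (Sum.inl x)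
        rw [hha]
        exact gm_reach_lift hr
      · rw [hke]
        have hxL : x ∉ lvT := by
          intro hL
          rw [hκleaf x hL] at hke
          exact Sum.inl_ne_inr hke
        refine ⟨?_, ?_, hvlt⟩
        · constructor
          · exact Relation.ReflTransGen.single ⟨Sum.inl e, rfl, rfl⟩
          · intro h
            have hte : T.head e = T.tail e := Sum.inl.inj h
            exact hT.acyclic x
              (Relation.TransGen.single ⟨e, by rw [← hte]; exact hhe, hhe⟩)
        · show (geneMULGraph T ρT).Reach ((geneMULGraph T ρT).head a)
            (Sum.inl (T.tail e))
          rw [hha]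
          exact gm_reach_lift (reach_tail_of_head hT hr hne hxL hhe)
  refine ⟨?_, ?_, ?_, ?_, ?_, ?_⟩
  -- M0
  · intro x d h
    by_cases hL : x ∈ lvT
    · rw [hκleaf x hL] at h
      have hd : d = Sum.inl x := (Sum.inl.inj h).symm
      subst hd
      rintro ⟨_, hout⟩
      rw [gm_outDeg] at hout
      have h0 : T.outDeg x = 0 := ((hT.leaf_iff x).1 hL).1
      omega
    by_cases hs : t x = Event.spec
    · rw [hκspec x hL hs] at h
      have hd : d = Sum.inl x := (Sum.inl.inj h).symm
      subst hd
      rintro ⟨_, hout⟩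
      rw [gm_outDeg] at hout
      have h2 : 2 ≤ T.outDeg x := by
        by_cases hρ : x = ρT
        · exact hρ ▸ hT.root_out
        · exact (hT.inner_deg x hL hρ).2
      omega
    · by_cases hρ : x = ρT
      · subst hρ
        rw [hκroot hL hs] at h
        exact (Sum.inr_ne_inl h).elim
      · obtain ⟨e, hke, _⟩ := hκdup x hL hs hρ
        rw [hke] at h
        exact (Sum.inr_ne_inl h).elim
  -- M1
  · intro x hx
    exact ⟨Sum.inl x, hκleaf x hx, ⟨x, hx, rfl⟩, ⟨x, hx, rfl, rfl⟩⟩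
  -- M2i
  · intro x hL hs
    refine ⟨Sum.inl x, hκspec x hL hs, ?_, ?_⟩
    · rintro ⟨g, hg, hEq⟩
      exact hL ((Sum.inl.inj hEq) ▸ hg)
    · obtain ⟨e₁, e₂, hne12, ht₁, ht₂⟩ := two_out hT hL
      have hc12 : T.head e₁ ≠ T.head e₂ := by
        intro h
        exact hne12 (hT.multiarc_free e₁ e₂ (ht₁.trans ht₂.symm) h)
      refine ⟨T.head e₁, T.head e₂, ⟨e₁, ht₁, rfl⟩, ⟨e₂, ht₂, rfl⟩, hc12,
        Sum.inl e₁, Sum.inl e₂, congrArg Sum.inl ht₁, congrArg Sum.inl ht₂, ?_, ?_, ?_, ?_⟩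
      · rw [hhpt (T.head e₁) (no_head_root hT e₁)]
        exact Relation.ReflTransGen.refl
      · rw [hhpt (T.head e₂) (no_head_root hT e₂)]
        exact Relation.ReflTransGen.refl
      · rintro (heq | ⟨_, hmid, _⟩)
        · exact hne12 (Sum.inl.inj (Sum.inr.inj heq))
        · obtain ⟨v, hv, hrv⟩ := gm_reach_proj
            (show (geneMULGraph T ρT).Reach (Sum.inl (T.head e₂))
              (Sum.inl (T.tail e₁)) from hmid)
          have hvx : v = T.tail e₁ := (Sum.inl.inj hv).symm
          subst hvx
          exact hT.acyclic x
            (Relation.TransGen.head' ⟨e₂, ht₂, rfl⟩ (by rw [ht₁] at hrv; exact hrv))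
      · rintro (heq | ⟨_, hmid, _⟩)
        · exact hne12 (Sum.inl.inj (Sum.inr.inj heq)).symm
        · obtain ⟨v, hv, hrv⟩ := gm_reach_proj
            (show (geneMULGraph T ρT).Reach (Sum.inl (T.head e₁))
              (Sum.inl (T.tail e₂)) from hmid)
          have hvx : v = T.tail e₂ := (Sum.inl.inj hv).symm
          subst hvx
          exact hT.acyclic x
            (Relation.TransGen.head' ⟨e₁, ht₁, rfl⟩ (by rw [ht₂] at hrv; exact hrv))
  -- M2ii
  · intro x hL hd
    by_cases hρ : x = ρT
    · subst hρ
      exact ⟨Sum.inr (), hκroot hL (hdne hd)⟩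
    · obtain ⟨e, hke, _⟩ := hκdup x hL (hdne hd) hρ
      exact ⟨Sum.inl e, hke⟩
  -- M3d
  · intro x y hxy _ _ _ _
    exact Or.inr (key x y hxy)
  -- M3s
  · intro x y hxy _
    exact key x y hxy

end Phylo
end

section
/- Suppose (T;t,σ) is an event-labeled gene tree and (M,χ) is a MUL-tree. If there is a MUL-reconciliation map from (T;t,σ) to (M,χ), then there is a MUL-reconciliation map from (T;t,σ) to any subdivision (M',χ) of (M,χ). -/
namespace Phylo

variable {V E W F D U S : Type}

/-- The internal vertices of a path given as a vertex list. -/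
def internals (p : List V) : List V := (p.drop 1).dropLast

/-- `(M', lv', ρ', χ')` is a subdivision of the (pseudo) MUL-tree `(M, lv, ρ, χ)`:
    `M'` is obtained from `M` by replacing each arc by a directed path.
    The map `ι` embeds the vertices of `M` into `M'` and `P e` is the directed path
    of `M'` replacing the arc `e`; the internal vertices of these paths are new,
    pairwise distinct, and together with the `ι`-images exhaust `M'`; every arc of
    `M'` lies on one of these paths. -/
def IsSubdivisionOf {D' U' : Type} (M' : MGraph D' U') (lv' : Set D') (ρ' : D')
    (χ' : S → Set D') (M : MGraph D U) (lv : Set D) (ρ : D) (χ : S → Set D) : Prop :=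
  ∃ (ι : D → D') (P : U → List D'),
    Function.Injective ι ∧ ρ' = ι ρ ∧ lv' = ι '' lv ∧ (∀ x : S, χ' x = ι '' χ x) ∧
    (∀ e : U, M'.IsDiPath (P e) ∧ (P e).head? = some (ι (M.tail e)) ∧
        (P e).getLast? = some (ι (M.head e))) ∧
    (∀ e : U, ∀ w ∈ internals (P e), ¬ ∃ d : D, ι d = w) ∧
    (∀ e f : U, e ≠ f → ∀ w : D', w ∈ internals (P e) → w ∉ internals (P f)) ∧
    (∀ w : D', (∃ d : D, ι d = w) ∨ ∃ e : U, w ∈ internals (P e)) ∧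
    (∀ a : U', ∃ (e : U) (l₁ l₂ : List D'),
        P e = l₁ ++ M'.tail a :: M'.head a :: l₂)


private lemma chain_reach {α : Type} {R : α → α → Prop} :
    ∀ (q : List α) (a b : α), q.Chain' R → q.head? = some a → q.getLast? = some b →
      Relation.ReflTransGen R a b
  | [], a, b => by simp
  | [x], a, b => by
      intro _ ha hb
      simp only [List.head?_cons, Option.some.injEq] at ha
      simp only [List.getLast?_singleton, Option.some.injEq] at hb
      subst ha; subst hb; exact .refl
  | x :: y :: l, a, b => by
      intro hc ha hb
      simp only [List.head?_cons, Option.some.injEq] at ha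
      subst ha
      have h1 : R x y := (List.isChain_cons_cons.mp hc).1
      have h2 := chain_reach (y :: l) y b (List.isChain_cons_cons.mp hc).2 rfl
        (by rw [← List.getLast?_cons_cons (a := x)]; exact hb)
      exact .trans (.single h1) h2

private lemma exists_concat_two {α : Type} :
    ∀ (q : List α) (b : α), 2 ≤ q.length → q.getLast? = some b →
      ∃ (l : List α) (u : α), q = l ++ [u, b]
  | [], _ => by simp
  | [x], _ => by simp
  | [x, y], b => by
      intro _ hb
      simp only [List.getLast?_cons_cons, List.getLast?_singleton, Option.some.injEq] at hb
      exact ⟨[], x, by simp [hb]⟩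
  | x :: y :: z :: l, b => by
      intro _ hb
      obtain ⟨l', u, h⟩ := exists_concat_two (y :: z :: l) b (by simp) (by
        rw [← List.getLast?_cons_cons (a := x)]; exact hb)
      exact ⟨x :: l', u, by simp [h]⟩

private lemma mem_dropLast_mid {α : Type} (s : List α) (u : α) (t : List α) (ht : t ≠ []) :
    u ∈ (s ++ u :: t).dropLast := by
  have h : s ++ u :: t = (s ++ [u]) ++ t := by simp
  rw [h, List.dropLast_append_of_ne_nil ht]
  exact List.mem_append_left _ (by simp)

private lemma mem_internals_left {α : Type} (l₁ : List α) (u v : α) (l₂ : List α)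
    (h : l₁ ≠ []) : u ∈ internals (l₁ ++ u :: v :: l₂) := by
  obtain ⟨x, l₁', rfl⟩ := List.exists_cons_of_ne_nil h
  show u ∈ ((x :: l₁' ++ u :: v :: l₂).drop 1).dropLast
  simp only [List.cons_append, List.drop_succ_cons, List.drop_zero]
  exact mem_dropLast_mid l₁' u (v :: l₂) (by simp)

private lemma mem_internals_right {α : Type} (l₁ : List α) (u v : α) (l₂ : List α)
    (h : l₂ ≠ []) : v ∈ internals (l₁ ++ u :: v :: l₂) := by
  cases l₁ with
  | nil =>
      show v ∈ ((u :: v :: l₂).drop 1).dropLast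
      simp only [List.drop_succ_cons, List.drop_zero]
      exact mem_dropLast_mid [] v l₂ h
  | cons x l₁' =>
      show v ∈ ((x :: l₁' ++ u :: v :: l₂).drop 1).dropLast
      simp only [List.cons_append, List.drop_succ_cons, List.drop_zero]
      have h2 : l₁' ++ u :: v :: l₂ = (l₁' ++ [u]) ++ v :: l₂ := by simp
      rw [h2]
      exact mem_dropLast_mid (l₁' ++ [u]) v l₂ h
/-- If there is a MUL-reconciliation map from the event-labeled gene
    tree `(T;t,σ)` to a MUL-tree `(M,χ)`, then there is a MUL-reconciliation map
    from `(T;t,σ)` to any subdivision `(M',χ)` of `(M,χ)`. -/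
theorem mul_recon_of_subdivision {V E D U D' U' S : Type}
    (T : MGraph V E) (lvT : Set V) (ρT : V) (t : V → Event) (σ : V → S)
    (hT : IsGeneTree T lvT ρT σ)
    (M : MGraph D U) (lvM : Set D) (ρM : D) (χ : S → Set D)
    (hM : IsMULTree M lvM ρM χ)
    (M' : MGraph D' U') (lvM' : Set D') (ρM' : D') (χ' : S → Set D')
    (hsub : IsSubdivisionOf M' lvM' ρM' χ' M lvM ρM χ)
    (κ : V → D ⊕ U) (hκ : IsMULRecon T lvT t σ M lvM χ κ) :
    ∃ κ' : V → D' ⊕ U', IsMULRecon T lvT t σ M' lvM' χ' κ' := by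
  classical
  obtain ⟨ι, P, hinj, hρ, hlv, hχEq, hpath, hnew, hdisj, hcover, harc⟩ := hsub
  have hMacyc : M.Acyclic := hM.1.acyclic
  have hMhne : ∀ e : U, M.head e ≠ M.tail e := by
    intro e h
    exact hMacyc (M.tail e) (Relation.TransGen.single ⟨e, rfl, h⟩)
  have hvltarcM : ∀ a : U, M.vlt (M.head a) (M.tail a) := fun a =>
    ⟨Relation.ReflTransGen.single ⟨a, rfl, rfl⟩, hMhne a⟩
  -- decomposition of the paths from the front
  have hfront : ∀ e : U, ∃ (v : D') (l : List D'), P e = ι (M.tail e) :: v :: l := by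
    intro e
    obtain ⟨⟨hne, hch, hnd⟩, hh, hl⟩ := hpath e
    obtain ⟨x, q, hq⟩ := List.exists_cons_of_ne_nil hne
    rw [hq] at hh
    simp only [List.head?_cons, Option.some.injEq] at hh
    cases q with
    | nil =>
        rw [hq] at hl
        simp only [List.getLast?_singleton, Option.some.injEq] at hl
        exact absurd (hinj (hl.symm.trans hh)) (hMhne e)
    | cons v l => exact ⟨v, l, by rw [hq, hh]⟩
  choose sv sl hPf using hfront
  -- decomposition from the back
  have hback : ∀ e : U, ∃ (l : List D') (u : D'), P e = l ++ [u, ι (M.head e)] := by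
    intro e
    refine exists_concat_two (P e) _ ?_ (hpath e).2.2
    rw [hPf e]; simp
  choose pl pu hPb using hback
  -- the chosen first and last arcs of each path
  have hAF : ∀ e : U, ∃ a : U', M'.tail a = ι (M.tail e) ∧ M'.head a = sv e := by
    intro e
    have hc := (hpath e).1.2.1
    rw [hPf e] at hc
    exact (List.isChain_cons_cons.mp hc).1
  choose fA hfAt hfAh using hAF
  have hAB : ∀ e : U, ∃ a : U', M'.tail a = pu e ∧ M'.head a = ι (M.head e) := by
    intro e
    have hc := (hpath e).1.2.1
    rw [hPb e] at hc
    have hsub2 : ([pu e, ι (M.head e)] : List D') <:+ (pl e ++ [pu e, ι (M.head e)]) :=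
      ⟨pl e, rfl⟩
    have := hc.suffix hsub2
    exact (List.isChain_cons_cons.mp this).1
  choose lA hlAt hlAh using hAB
  -- reachability lifting
  have hreachP : ∀ e : U, M'.Reach (ι (M.tail e)) (ι (M.head e)) := fun e =>
    chain_reach _ _ _ (hpath e).1.2.1 (hpath e).2.1 (hpath e).2.2
  have hliftA : ∀ a b : D, M.Adj a b → M'.Reach (ι a) (ι b) := by
    rintro a b ⟨e, rfl, rfl⟩; exact hreachP e
  have hlift : ∀ a b : D, M.Reach a b → M'.Reach (ι a) (ι b) := by
    intro a b h
    induction h with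
    | refl => exact .refl
    | tail _ h2 ih => exact ih.trans (hliftA _ _ h2)
  have hreach_pen : ∀ e : U, M'.Reach (ι (M.tail e)) (pu e) := by
    intro e
    have hc : (pl e ++ [pu e]).Chain' M'.Adj := by
      have hc0 := (hpath e).1.2.1
      rw [hPb e] at hc0
      refine hc0.prefix ⟨[ι (M.head e)], by simp⟩
    have hh : (pl e ++ [pu e]).head? = some (ι (M.tail e)) := by
      have h0 := (hpath e).2.1
      rw [hPb e] at h0
      cases hpl : pl e with
      | nil => rw [hpl] at h0; simpa using h0
      | cons x l => rw [hpl] at h0; simpa using h0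
    exact chain_reach _ _ _ hc hh List.getLast?_concat
  have hreach_snd : ∀ e : U, M'.Reach (sv e) (ι (M.head e)) := by
    intro e
    have hc := (hpath e).1.2.1
    rw [hPf e] at hc
    have hl := (hpath e).2.2
    rw [hPf e, List.getLast?_cons_cons] at hl
    exact chain_reach _ _ _ (List.isChain_cons_cons.mp hc).2 rfl hl
  have hne_pen : ∀ e : U, pu e ≠ ι (M.head e) := by
    intro e
    have hnd := (hpath e).1.2.2
    rw [hPb e] at hnd
    have hnd2 : ([pu e, ι (M.head e)] : List D').Nodup :=
      (List.sublist_append_right (pl e) _).nodup hnd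
    simpa using hnd2
  have hvltarc' : ∀ e : U, M'.vlt (ι (M.head e)) (pu e) := fun e =>
    ⟨Relation.ReflTransGen.single ⟨lA e, hlAt e, hlAh e⟩, fun h => hne_pen e h.symm⟩
  -- facts about the second vertex of a path
  have hsv_last : ∀ e : U, sl e = [] → sv e = ι (M.head e) := by
    intro e h
    have hl := (hpath e).2.2
    rw [hPf e, h] at hl
    simpa using hl
  have hsv_int : ∀ e : U, sl e ≠ [] → sv e ∈ internals (P e) := by
    intro e h
    obtain ⟨x, l, hx⟩ := List.exists_cons_of_ne_nil h
    rw [hPf e, hx]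
    exact mem_internals_right [] (ι (M.tail e)) (sv e) (x :: l) (by simp)
  have hsv_ne : ∀ a₁ a₂ : U, a₁ ≠ a₂ → sv a₁ ≠ sv a₂ := by
    intro a₁ a₂ hne heq
    cases hs1 : sl a₁ with
    | nil =>
        have h1 := hsv_last a₁ hs1
        cases hs2 : sl a₂ with
        | nil =>
            have h2 := hsv_last a₂ hs2
            -- two arcs with the same head in M must be equal
            have hh : M.head a₁ = M.head a₂ := hinj ((h1.symm.trans heq).trans h2)
            -- indegree of any vertex of M is at most 1
            have hle : M.inDeg (M.head a₂) ≤ 1 := by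
              by_cases hv : M.head a₂ ∈ lvM
              · exact le_of_eq ((hM.1.leaf_iff _).mp hv).2
              · by_cases hvρ : M.head a₂ = ρM
                · rw [hvρ, hM.1.root_in]
                  exact Nat.zero_le 1
                · exact le_of_eq (hM.1.inner_deg _ hv hvρ).1
            haveI := hM.1.finU
            haveI : Nonempty {e : U // M.head e = M.head a₂} := ⟨⟨a₁, hh⟩⟩
            have hpos : 0 < Nat.card {e : U // M.head e = M.head a₂} := Nat.card_pos
            have hone : Nat.card {e : U // M.head e = M.head a₂} = 1 := le_antisymm hle hpos
            have hss := (Nat.card_eq_one_iff_unique.mp hone).1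
            have : (⟨a₁, hh⟩ : {e : U // M.head e = M.head a₂}) = ⟨a₂, rfl⟩ :=
              hss.elim _ _
            exact hne (congrArg Subtype.val this)
        | cons x l =>
            exact hnew a₂ (sv a₂) (hsv_int a₂ (by rw [hs2]; simp))
              ⟨M.head a₁, h1.symm.trans heq⟩
    | cons x l =>
        cases hs2 : sl a₂ with
        | nil =>
            exact hnew a₁ (sv a₁) (hsv_int a₁ (by rw [hs1]; simp))
              ⟨M.head a₂, (hsv_last a₂ hs2).symm.trans heq.symm⟩
        | cons y l' =>
            exact hdisj a₁ a₂ hne (sv a₁) (hsv_int a₁ (by rw [hs1]; simp))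
              (heq ▸ hsv_int a₂ (by rw [hs2]; simp))
  -- the projection map
  have hπdef : ∃ π : D' → D, (∀ d, π (ι d) = d) ∧
      (∀ (e : U) (w : D'), w ∈ internals (P e) → π w = M.head e) := by
    refine ⟨fun w => if h : ∃ d, ι d = w then h.choose
      else M.head ((hcover w).resolve_left h).choose, ?_, ?_⟩
    · intro d
      have h : ∃ d', ι d' = ι d := ⟨d, rfl⟩
      simp only [dif_pos h]
      exact hinj h.choose_spec
    · intro e w hw
      have hno : ¬ ∃ d, ι d = w := hnew e w hw
      simp only [dif_neg hno]
      by_contra hne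
      have he' : ((hcover w).resolve_left hno).choose ≠ e := fun h => hne (by rw [h])
      exact hdisj _ e he' w ((hcover w).resolve_left hno).choose_spec hw
  obtain ⟨π, hπι, hπint⟩ := hπdef
  have hproj_adj : ∀ u v : D', M'.Adj u v → M.Reach (π u) (π v) := by
    rintro u v ⟨a, rfl, rfl⟩
    obtain ⟨e, l₁, l₂, hPe⟩ := harc a
    have hu : π (M'.tail a) = M.tail e ∨ π (M'.tail a) = M.head e := by
      cases hl₁ : l₁ with
      | nil =>
          left
          have h0 := (hpath e).2.1
          rw [hPe, hl₁] at h0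
          simp only [List.nil_append, List.head?_cons, Option.some.injEq] at h0
          rw [h0, hπι]
      | cons x l =>
          right
          refine hπint e _ ?_
          rw [hPe]
          exact mem_internals_left l₁ (M'.tail a) (M'.head a) l₂ (by rw [hl₁]; simp)
    have hv : π (M'.head a) = M.head e := by
      cases hl₂ : l₂ with
      | nil =>
          have h0 := (hpath e).2.2
          rw [hPe, hl₂] at h0
          have h1 : (l₁ ++ [M'.tail a, M'.head a] : List D').getLast? = some (M'.head a) := by
            have : (l₁ ++ [M'.tail a, M'.head a] : List D') =
                (l₁ ++ [M'.tail a]) ++ [M'.head a] := by simp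
            rw [this, List.getLast?_concat]
          rw [h1] at h0
          simp only [Option.some.injEq] at h0
          rw [h0, hπι]
      | cons y l =>
          refine hπint e _ ?_
          rw [hPe]
          exact mem_internals_right l₁ (M'.tail a) (M'.head a) l₂ (by rw [hl₂]; simp)
    rcases hu with hu | hu
    · rw [hu, hv]
      exact Relation.ReflTransGen.single ⟨e, rfl, rfl⟩
    · rw [hu, hv]
      exact Relation.ReflTransGen.refl
  have hproj : ∀ u v : D', M'.Reach u v → M.Reach (π u) (π v) := by
    intro u v h
    induction h with
    | refl => exact .refl
    | tail _ h2 ih => exact ih.trans (hproj_adj _ _ h2)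
  have hπ_snd : ∀ e : U, π (sv e) = M.head e := by
    intro e
    cases hsl : sl e with
    | nil => rw [hsv_last e hsl, hπι]
    | cons x l => exact hπint e _ (hsv_int e (by rw [hsl]; simp))
  -- the mapping lemma for the strict order
  have hmap_slt : ∀ p q : D ⊕ U, M.slt p q →
      M'.slt (Sum.map ι lA p) (Sum.map ι lA q) := by
    intro p q h
    cases p with
    | inl x =>
        cases q with
        | inl y =>
            simp only [Sum.map_inl]
            exact ⟨hlift _ _ h.1, fun hxy => h.2 (hinj hxy)⟩
        | inr f =>
            simp only [Sum.map_inl, Sum.map_inr]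
            show M'.vle (ι x) (M'.head (lA f))
            rw [hlAh f]
            exact hlift _ _ h
    | inr e =>
        cases q with
        | inl y =>
            simp only [Sum.map_inl, Sum.map_inr]
            show M'.vle (M'.tail (lA e)) (ι y)
            rw [hlAt e]
            exact (hlift _ _ h).trans (hreach_pen e)
        | inr f =>
            obtain ⟨h1, h2, h3⟩ := h
            simp only [Sum.map_inr]
            refine ⟨?_, ?_, ?_⟩
            · rw [hlAt e, hlAh e]; exact hvltarc' e
            · show M'.vle (M'.tail (lA e)) (M'.head (lA f))
              rw [hlAt e, hlAh f]
              exact (hlift _ _ h2).trans (hreach_pen e)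
            · rw [hlAt f, hlAh f]; exact hvltarc' f
  have hmap_sle : ∀ p q : D ⊕ U, M.sle p q →
      M'.sle (Sum.map ι lA p) (Sum.map ι lA q) := by
    rintro p q (rfl | h)
    · exact Or.inl rfl
    · exact Or.inr (hmap_slt _ _ h)
  have hhpt : ∀ c : V, M'.hpt (Sum.map ι lA (κ c)) = ι (M.hpt (κ c)) := by
    intro c
    cases κ c with
    | inl d => simp [MGraph.hpt]
    | inr f => simp [MGraph.hpt, hlAh f]
  -- incomparability of first arcs
  have hincomp : ∀ (a₁ a₂ : U), M.tail a₁ = M.tail a₂ →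
      ¬ M.sle (.inr a₁) (.inr a₂) → ¬ M'.slt (.inr (fA a₁)) (.inr (fA a₂)) := by
    intro a₁ a₂ ht hns h
    obtain ⟨_, h2, _⟩ := h
    have h2' : M'.Reach (sv a₂) (ι (M.tail a₁)) := by
      rw [← hfAt a₁, ← hfAh a₂]
      exact h2
    have hr := hproj _ _ h2'
    rw [hπ_snd a₂, hπι] at hr
    exact hns (Or.inr ⟨hvltarcM a₁, hr, hvltarcM a₂⟩)
  have hincomp' : ∀ (a₁ a₂ : U), M.tail a₁ = M.tail a₂ →
      ¬ M.sle (.inr a₁) (.inr a₂) → ¬ M'.sle (.inr (fA a₁)) (.inr (fA a₂)) := by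
    intro a₁ a₂ ht hns h
    have hane : a₁ ≠ a₂ := fun hh => hns (Or.inl (by rw [hh]))
    rcases h with h | h
    · have : fA a₁ = fA a₂ := by injection h
      exact hsv_ne a₁ a₂ hane (by rw [← hfAh a₁, ← hfAh a₂, this])
    · exact hincomp a₁ a₂ ht hns h
  -- the new reconciliation map
  refine ⟨fun x => Sum.map ι lA (κ x), ?_, ?_, ?_, ?_, ?_, ?_⟩
  · -- M0
    intro x d' hd'
    rintro ⟨hin, hout⟩
    by_cases hx : x ∈ lvT
    · obtain ⟨d, hd, hdlv, _⟩ := hκ.M1 x hx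
      have hd'' : d' = ι d := by
        rw [hd] at hd'
        simp only [Sum.map_inl, Sum.inl.injEq] at hd'
        exact hd'.symm
      -- d is a leaf of M, so ι d has no outgoing arc in M'
      have hnonempty : Nonempty {a : U' // M'.tail a = d'} :=
        (Nat.card_eq_one_iff_unique.mp hout).2
      obtain ⟨a, hta⟩ := hnonempty
      obtain ⟨e, l₁, l₂, hPe⟩ := harc a
      have hte : M.tail e = d := by
        cases hl₁ : l₁ with
        | nil =>
            have h0 := (hpath e).2.1
            rw [hPe, hl₁] at h0
            simp only [List.nil_append, List.head?_cons, Option.some.injEq] at h0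
            exact hinj (h0.symm.trans (hta.trans hd''))
        | cons z l =>
            refine absurd (⟨d, (hta.trans hd'').symm⟩ : ∃ d₀, ι d₀ = M'.tail a)
              (hnew e (M'.tail a) ?_)
            rw [hPe]
            exact mem_internals_left l₁ _ _ l₂ (by rw [hl₁]; simp)
      have h0 : M.outDeg d = 0 := ((hM.1.leaf_iff d).mp hdlv).1
      haveI := hM.1.finU
      haveI : Nonempty {e' : U // M.tail e' = d} := ⟨⟨e, hte⟩⟩
      have hpos : 0 < Nat.card {e' : U // M.tail e' = d} := Nat.card_pos
      rw [MGraph.outDeg] at h0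
      omega
    · cases htx : t x with
      | dupl =>
          obtain ⟨a, ha⟩ := hκ.M2ii x hx htx
          rw [ha] at hd'
          simp at hd'
      | spec =>
          obtain ⟨d, hd, hdlv, c₁, c₂, _, _, _, a₁, a₂, ht1, ht2, _, _, hi12, _⟩ :=
            hκ.M2i x hx htx
          have hd'' : d' = ι d := by
            rw [hd] at hd'
            simp only [Sum.map_inl, Sum.inl.injEq] at hd'
            exact hd'.symm
          have hane : a₁ ≠ a₂ := fun hh => hi12 (Or.inl (by rw [hh]))
          have hfne : fA a₁ ≠ fA a₂ := fun h =>
            hsv_ne a₁ a₂ hane (by rw [← hfAh a₁, ← hfAh a₂, h])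
          have hss := (Nat.card_eq_one_iff_unique.mp hout).1
          have h1 : (⟨fA a₁, by rw [hfAt a₁, ht1, ← hd'']⟩ : {a : U' // M'.tail a = d'}) =
              ⟨fA a₂, by rw [hfAt a₂, ht2, ← hd'']⟩ := hss.elim _ _
          exact hfne (congrArg Subtype.val h1)
  · -- M1
    intro x hx
    obtain ⟨d, hd, hdlv, hdχ⟩ := hκ.M1 x hx
    exact ⟨ι d, by rw [hd]; rfl, by rw [hlv]; exact ⟨d, hdlv, rfl⟩,
      by rw [hχEq]; exact ⟨d, hdχ, rfl⟩⟩
  · -- M2i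
    intro x hx htx
    obtain ⟨d, hd, hdlv, c₁, c₂, hc1, hc2, hcne, a₁, a₂, ht1, ht2, hr1, hr2, hi12, hi21⟩ :=
      hκ.M2i x hx htx
    refine ⟨ι d, by rw [hd]; rfl, ?_, c₁, c₂, hc1, hc2, hcne, fA a₁, fA a₂,
      by rw [hfAt a₁, ht1], by rw [hfAt a₂, ht2], ?_, ?_, ?_, ?_⟩
    · rw [hlv]
      rintro ⟨d₀, hd₀, he⟩
      exact hdlv (hinj he ▸ hd₀)
    · rw [hfAh a₁, hhpt c₁]
      exact (hreach_snd a₁).trans (hlift _ _ hr1)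
    · rw [hfAh a₂, hhpt c₂]
      exact (hreach_snd a₂).trans (hlift _ _ hr2)
    · exact hincomp' a₁ a₂ (ht1.trans ht2.symm) hi12
    · exact hincomp' a₂ a₁ (ht2.trans ht1.symm) hi21
  · -- M2ii
    intro x hx htx
    obtain ⟨a, ha⟩ := hκ.M2ii x hx htx
    exact ⟨lA a, by rw [ha]; rfl⟩
  · -- M3d
    intro x y h hx hy htx hty
    exact hmap_sle _ _ (hκ.M3d x y h hx hy htx hty)
  · -- M3s
    intro x y h hcond
    exact hmap_slt _ _ (hκ.M3s x y h hcond)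

end Phylo
end

section
/- Given any event-labeled gene tree (T;t,σ), there exists a species network N for (T;t,σ), i.e., a network N on 𝕊 together with a TreeNet-reconciliation map from (T;t,σ) to N. -/
namespace Phylo

variable {V E W F D U S : Type}

/-! ### Auxiliary material for the construction -/

section Aux

variable {V E : Type}

lemma card_eq_one_of {α : Type} (a : α) (h : ∀ b : α, b = a) : Nat.card α = 1 := by
  haveI : Unique α := ⟨⟨a⟩, h⟩
  exact Nat.card_unique

lemma two_le_card {α : Type} [Finite α] {a b : α} (hab : a ≠ b) : 2 ≤ Nat.card α := by
  have h2 : Nat.card Bool = 2 := by simp [Nat.card_eq_fintype_card]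
  have hle : Nat.card Bool ≤ Nat.card α := by
    apply Nat.card_le_card_of_injective (fun x : Bool => if x then a else b)
    intro x y hxy
    cases x <;> cases y <;> simp_all
  omega

lemma reach_antisymm {G : MGraph V E} (hac : G.Acyclic) {a b : V}
    (h1 : G.Reach a b) (h2 : G.Reach b a) : a = b := by
  by_contra hne
  rcases Relation.ReflTransGen.cases_head h1 with rfl | ⟨c, hc, hcb⟩
  · exact hne rfl
  · exact hac a (Relation.TransGen.head' hc (hcb.trans h2))

/-- number of strict ancestors of `x` -/
noncomputable def depth (T : MGraph V E) (x : V) : ℕ := Set.ncard {u | T.vlt x u}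

lemma depth_lt [Finite V] {T : MGraph V E} (hac : T.Acyclic) {x y : V} (h : T.vlt x y) :
    depth T y < depth T x := by
  apply Set.ncard_lt_ncard ?_ (Set.toFinite _)
  constructor
  · intro u hu
    obtain ⟨h1, h2⟩ := hu
    obtain ⟨h3, h4⟩ := h
    refine ⟨h1.trans h3, ?_⟩
    rintro rfl
    exact h4 (reach_antisymm hac h1 h3)
  · intro hsup
    have : T.vlt y y := hsup h
    exact this.2 rfl

lemma depth_le (T : MGraph V E) [Finite V] (x : V) : depth T x ≤ Nat.card V := by
  have h1 : Set.ncard {u | T.vlt x u} ≤ Set.ncard (Set.univ : Set V) :=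
    Set.ncard_le_ncard (Set.subset_univ _) (Set.toFinite _)
  simpa [depth, Set.ncard_univ] using h1

end Aux

/-! ### The universal species network -/

section Construction

/-- Vertices of the constructed network: a root, its child `top`, a double chain
`pv i`, `qv i` of levels `0,…,n`, hybrid vertices `av i`, `bv i` between levels
`i` and `i+1`, hybrid vertices `hv s` collecting the bottom of both chains, and a
leaf `lf s` for every species `s`. -/
inductive NV (S : Type) (n : ℕ) : Type
  | root : NV S n
  | top : NV S n
  | pv : Fin (n + 1) → NV S n
  | qv : Fin (n + 1) → NV S n
  | av : Fin n → NV S n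
  | bv : Fin n → NV S n
  | hv : S → NV S n
  | lf : S → NV S n

/-- Arcs of the constructed network. -/
inductive NA (S : Type) (n : ℕ) : Type
  | rt : NA S n
  | tp : NA S n
  | tq : NA S n
  | pa : Fin n → NA S n
  | pb : Fin n → NA S n
  | qa : Fin n → NA S n
  | qb : Fin n → NA S n
  | ap : Fin n → NA S n
  | bq : Fin n → NA S n
  | ph : S → NA S n
  | qh : S → NA S n
  | hl : S → NA S n

variable {S : Type} {n : ℕ}

def ntail : NA S n → NV S n
  | .rt => .root
  | .tp => .top
  | .tq => .top
  | .pa i => .pv i.castSucc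
  | .pb i => .pv i.castSucc
  | .qa i => .qv i.castSucc
  | .qb i => .qv i.castSucc
  | .ap i => .av i
  | .bq i => .bv i
  | .ph _ => .pv (Fin.last n)
  | .qh _ => .qv (Fin.last n)
  | .hl s => .hv s

def nhead : NA S n → NV S n
  | .rt => .top
  | .tp => .pv 0
  | .tq => .qv 0
  | .pa i => .av i
  | .pb i => .bv i
  | .qa i => .av i
  | .qb i => .bv i
  | .ap i => .pv i.succ
  | .bq i => .qv i.succ
  | .ph s => .hv s
  | .qh s => .hv s
  | .hl s => .lf s

/-- The universal species network. -/
def net (S : Type) (n : ℕ) : MGraph (NV S n) (NA S n) := ⟨ntail, nhead⟩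

@[simp] lemma net_tail (e : NA S n) : (net S n).tail e = ntail e := rfl
@[simp] lemma net_head (e : NA S n) : (net S n).head e = nhead e := rfl

private def nvenc : NV S n →
    Fin (n + 1) ⊕ Fin (n + 1) ⊕ Fin n ⊕ Fin n ⊕ S ⊕ S ⊕ Bool
  | .root => .inr (.inr (.inr (.inr (.inr (.inr true)))))
  | .top => .inr (.inr (.inr (.inr (.inr (.inr false)))))
  | .pv i => .inl i
  | .qv i => .inr (.inl i)
  | .av i => .inr (.inr (.inl i))
  | .bv i => .inr (.inr (.inr (.inl i)))
  | .hv s => .inr (.inr (.inr (.inr (.inl s))))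
  | .lf s => .inr (.inr (.inr (.inr (.inr (.inl s)))))

instance [Finite S] : Finite (NV S n) := by
  apply Finite.of_injective (nvenc (S := S) (n := n))
  intro a b h
  cases a <;> cases b <;> simp_all [nvenc]

private def naenc : NA S n →
    Fin n ⊕ Fin n ⊕ Fin n ⊕ Fin n ⊕ Fin n ⊕ Fin n ⊕ S ⊕ S ⊕ S ⊕ Bool ⊕ Bool
  | .rt => .inr (.inr (.inr (.inr (.inr (.inr (.inr (.inr (.inr (.inl true)))))))))
  | .tp => .inr (.inr (.inr (.inr (.inr (.inr (.inr (.inr (.inr (.inl false)))))))))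
  | .tq => .inr (.inr (.inr (.inr (.inr (.inr (.inr (.inr (.inr (.inr true)))))))))
  | .pa i => .inl i
  | .pb i => .inr (.inl i)
  | .qa i => .inr (.inr (.inl i))
  | .qb i => .inr (.inr (.inr (.inl i)))
  | .ap i => .inr (.inr (.inr (.inr (.inl i))))
  | .bq i => .inr (.inr (.inr (.inr (.inr (.inl i)))))
  | .ph s => .inr (.inr (.inr (.inr (.inr (.inr (.inl s))))))
  | .qh s => .inr (.inr (.inr (.inr (.inr (.inr (.inr (.inl s)))))))
  | .hl s => .inr (.inr (.inr (.inr (.inr (.inr (.inr (.inr (.inl s))))))))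

instance [Finite S] : Finite (NA S n) := by
  apply Finite.of_injective (naenc (S := S) (n := n))
  intro a b h
  cases a <;> cases b <;> simp_all [naenc]

/-- A rank function witnessing acyclicity. -/
private def nrank : NV S n → ℕ
  | .root => 0
  | .top => 1
  | .pv i => 2 + 2 * i.val
  | .qv i => 2 + 2 * i.val
  | .av i => 3 + 2 * i.val
  | .bv i => 3 + 2 * i.val
  | .hv _ => 2 * n + 4
  | .lf _ => 2 * n + 5

private lemma nrank_adj {u v : NV S n} (h : (net S n).Adj u v) : nrank u < nrank v := by
  obtain ⟨e, rfl, rfl⟩ := h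
  cases e <;>
    simp [ntail, nhead, nrank, Fin.coe_castSucc, Fin.val_succ, Fin.val_last] <;>
    omega

lemma net_acyclic : (net S n).Acyclic := by
  intro v hv
  have key : ∀ a b : NV S n, Relation.TransGen (net S n).Adj a b → nrank a < nrank b := by
    intro a b h
    induction h with
    | single h => exact nrank_adj h
    | tail _ h ih => exact ih.trans (nrank_adj h)
  exact absurd (key v v hv) (lt_irrefl _)

/-! #### Adjacency and reachability facts -/

lemma adj_root_top : (net S n).Adj .root .top := ⟨.rt, rfl, rfl⟩
lemma adj_top_p : (net S n).Adj .top (.pv 0) := ⟨.tp, rfl, rfl⟩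
lemma adj_top_q : (net S n).Adj .top (.qv 0) := ⟨.tq, rfl, rfl⟩
lemma adj_p_a (i : Fin n) : (net S n).Adj (.pv i.castSucc) (.av i) := ⟨.pa i, rfl, rfl⟩
lemma adj_p_b (i : Fin n) : (net S n).Adj (.pv i.castSucc) (.bv i) := ⟨.pb i, rfl, rfl⟩
lemma adj_q_a (i : Fin n) : (net S n).Adj (.qv i.castSucc) (.av i) := ⟨.qa i, rfl, rfl⟩
lemma adj_q_b (i : Fin n) : (net S n).Adj (.qv i.castSucc) (.bv i) := ⟨.qb i, rfl, rfl⟩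
lemma adj_a_p (i : Fin n) : (net S n).Adj (.av i) (.pv i.succ) := ⟨.ap i, rfl, rfl⟩
lemma adj_b_q (i : Fin n) : (net S n).Adj (.bv i) (.qv i.succ) := ⟨.bq i, rfl, rfl⟩
lemma adj_p_h (s : S) : (net S n).Adj (.pv (Fin.last n)) (.hv s) := ⟨.ph s, rfl, rfl⟩
lemma adj_q_h (s : S) : (net S n).Adj (.qv (Fin.last n)) (.hv s) := ⟨.qh s, rfl, rfl⟩
lemma adj_h_l (s : S) : (net S n).Adj (.hv s) (.lf s) := ⟨.hl s, rfl, rfl⟩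

private lemma reach_p_p_aux (k : ℕ) :
    ∀ i j : Fin (n + 1), (j : ℕ) = (i : ℕ) + k →
      (net S n).Reach (.pv i) (.pv j) := by
  induction k with
  | zero =>
      intro i j h
      have : i = j := Fin.ext (by omega)
      rw [this]
      exact Relation.ReflTransGen.refl
  | succ k ih =>
      intro i j h
      have hin : (i : ℕ) < n := by have := j.isLt; omega
      have h1 := adj_p_a (S := S) ⟨i, hin⟩
      have hc : (Fin.castSucc (⟨(i : ℕ), hin⟩ : Fin n)) = i := Fin.ext rfl
      rw [hc] at h1
      refine Relation.ReflTransGen.head h1 (Relation.ReflTransGen.head (adj_a_p _) ?_)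
      apply ih
      simp [Fin.val_succ]
      omega

lemma reach_p_p (i j : Fin (n + 1)) (h : (i : ℕ) ≤ (j : ℕ)) :
    (net S n).Reach (.pv i) (.pv j) :=
  reach_p_p_aux ((j : ℕ) - (i : ℕ)) i j (by omega)

private lemma reach_q_q_aux (k : ℕ) :
    ∀ i j : Fin (n + 1), (j : ℕ) = (i : ℕ) + k →
      (net S n).Reach (.qv i) (.qv j) := by
  induction k with
  | zero =>
      intro i j h
      have : i = j := Fin.ext (by omega)
      rw [this]
      exact Relation.ReflTransGen.refl
  | succ k ih =>
      intro i j h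
      have hin : (i : ℕ) < n := by have := j.isLt; omega
      have h1 := adj_q_b (S := S) ⟨i, hin⟩
      have hc : (Fin.castSucc (⟨(i : ℕ), hin⟩ : Fin n)) = i := Fin.ext rfl
      rw [hc] at h1
      refine Relation.ReflTransGen.head h1 (Relation.ReflTransGen.head (adj_b_q _) ?_)
      apply ih
      simp [Fin.val_succ]
      omega

lemma reach_q_q (i j : Fin (n + 1)) (h : (i : ℕ) ≤ (j : ℕ)) :
    (net S n).Reach (.qv i) (.qv j) :=
  reach_q_q_aux ((j : ℕ) - (i : ℕ)) i j (by omega)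

lemma reach_p_leaf (i : Fin (n + 1)) (s : S) : (net S n).Reach (.pv i) (.lf s) := by
  have h1 : (net S n).Reach (.pv i) (.pv (Fin.last n)) :=
    reach_p_p i (Fin.last n) (by simp [Fin.val_last]; omega)
  exact h1.trans (Relation.ReflTransGen.head (adj_p_h s)
    (Relation.ReflTransGen.single (adj_h_l s)))

lemma reach_q_leaf (i : Fin (n + 1)) (s : S) : (net S n).Reach (.qv i) (.lf s) := by
  have h1 : (net S n).Reach (.qv i) (.qv (Fin.last n)) :=
    reach_q_q i (Fin.last n) (by simp [Fin.val_last]; omega)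
  exact h1.trans (Relation.ReflTransGen.head (adj_q_h s)
    (Relation.ReflTransGen.single (adj_h_l s)))

lemma reach_A_p (i : Fin n) (j : Fin (n + 1)) (h : (i : ℕ) + 1 ≤ (j : ℕ)) :
    (net S n).Reach (.av i) (.pv j) :=
  Relation.ReflTransGen.head (adj_a_p i)
    (reach_p_p i.succ j (by simp [Fin.val_succ]; omega))

lemma reach_A_A (i j : Fin n) (h : (i : ℕ) + 1 ≤ (j : ℕ)) :
    (net S n).Reach (.av i) (.av j) :=
  Relation.ReflTransGen.tail
    (reach_A_p i j.castSucc (by simp [Fin.coe_castSucc]; omega)) (adj_p_a j)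

lemma reach_A_leaf (i : Fin n) (s : S) : (net S n).Reach (.av i) (.lf s) :=
  Relation.ReflTransGen.head (adj_a_p i) (reach_p_leaf i.succ s)

lemma reach_B_q (i : Fin n) (j : Fin (n + 1)) (h : (i : ℕ) + 1 ≤ (j : ℕ)) :
    (net S n).Reach (.bv i) (.qv j) :=
  Relation.ReflTransGen.head (adj_b_q i)
    (reach_q_q i.succ j (by simp [Fin.val_succ]; omega))

lemma reach_B_A (i j : Fin n) (h : (i : ℕ) + 1 ≤ (j : ℕ)) :
    (net S n).Reach (.bv i) (.av j) :=
  Relation.ReflTransGen.tail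
    (reach_B_q i j.castSucc (by simp [Fin.coe_castSucc]; omega)) (adj_q_a j)

lemma reach_B_p (i : Fin n) (j : Fin (n + 1)) (h : (i : ℕ) + 2 ≤ (j : ℕ)) :
    (net S n).Reach (.bv i) (.pv j) := by
  have hin : (i : ℕ) + 1 < n := by have := j.isLt; omega
  exact (reach_B_A i ⟨(i : ℕ) + 1, hin⟩ (by simp)).trans
    (reach_A_p ⟨(i : ℕ) + 1, hin⟩ j (by simp; omega))

lemma reach_B_leaf (i : Fin n) (s : S) : (net S n).Reach (.bv i) (.lf s) :=
  Relation.ReflTransGen.head (adj_b_q i) (reach_q_leaf i.succ s)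

/-! #### Degrees -/

variable [Finite S]

lemma indeg_root : (net S n).inDeg .root = 0 := by
  have : IsEmpty {e : NA S n // (net S n).head e = NV.root} :=
    ⟨fun ⟨e, he⟩ => by cases e <;> simp [nhead] at he⟩
  exact Nat.card_of_isEmpty

lemma outdeg_root : (net S n).outDeg .root = 1 := by
  apply card_eq_one_of ⟨.rt, rfl⟩
  rintro ⟨e, he⟩
  apply Subtype.ext
  show e = _
  cases e <;> simp_all [ntail] <;> omega

lemma indeg_top : (net S n).inDeg .top = 1 := by
  apply card_eq_one_of ⟨.rt, rfl⟩
  rintro ⟨e, he⟩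
  apply Subtype.ext
  show e = _
  cases e <;> simp_all [nhead] <;> omega

lemma outdeg_top : 2 ≤ (net S n).outDeg .top := by
  apply two_le_card (a := (⟨.tp, rfl⟩ : {e : NA S n // (net S n).tail e = NV.top}))
    (b := ⟨.tq, rfl⟩)
  simp [Subtype.ext_iff]

lemma indeg_p (j : Fin (n + 1)) : (net S n).inDeg (.pv j) = 1 := by
  by_cases h0 : (j : ℕ) = 0
  · have hj : j = 0 := Fin.ext (by simpa using h0)
    subst hj
    apply card_eq_one_of ⟨.tp, rfl⟩
    rintro ⟨e, he⟩
    apply Subtype.ext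
    show e = _
    cases e <;> simp_all [nhead, Fin.ext_iff, Fin.val_succ] <;> omega
  · have hlt : (j : ℕ) - 1 < n := by have := j.isLt; omega
    have hj : (Fin.succ ⟨(j : ℕ) - 1, hlt⟩ : Fin (n + 1)) = j := Fin.ext (by
      simp [Fin.val_succ]; omega)
    apply card_eq_one_of ⟨.ap ⟨(j : ℕ) - 1, hlt⟩, by simp [nhead, hj]⟩
    rintro ⟨e, he⟩
    apply Subtype.ext
    show e = _
    cases e <;> simp [nhead, Fin.ext_iff, Fin.val_succ] at he ⊢ <;> omega

lemma indeg_q (j : Fin (n + 1)) : (net S n).inDeg (.qv j) = 1 := by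
  by_cases h0 : (j : ℕ) = 0
  · have hj : j = 0 := Fin.ext (by simpa using h0)
    subst hj
    apply card_eq_one_of ⟨.tq, rfl⟩
    rintro ⟨e, he⟩
    apply Subtype.ext
    show e = _
    cases e <;> simp_all [nhead, Fin.ext_iff, Fin.val_succ] <;> omega
  · have hlt : (j : ℕ) - 1 < n := by have := j.isLt; omega
    have hj : (Fin.succ ⟨(j : ℕ) - 1, hlt⟩ : Fin (n + 1)) = j := Fin.ext (by
      simp [Fin.val_succ]; omega)
    apply card_eq_one_of ⟨.bq ⟨(j : ℕ) - 1, hlt⟩, by simp [nhead, hj]⟩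
    rintro ⟨e, he⟩
    apply Subtype.ext
    show e = _
    cases e <;> simp [nhead, Fin.ext_iff, Fin.val_succ] at he ⊢ <;> omega

lemma outdeg_p (s₁ s₂ : S) (hs : s₁ ≠ s₂) (j : Fin (n + 1)) :
    2 ≤ (net S n).outDeg (.pv j) := by
  by_cases h : (j : ℕ) < n
  · have hc : (Fin.castSucc (⟨(j : ℕ), h⟩ : Fin n)) = j := Fin.ext rfl
    apply two_le_card
      (a := (⟨.pa ⟨(j : ℕ), h⟩, by simp [ntail, hc]⟩ :
          {e : NA S n // (net S n).tail e = NV.pv j}))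
      (b := ⟨.pb ⟨(j : ℕ), h⟩, by simp [ntail, hc]⟩)
    simp [Subtype.ext_iff]
  · have hj : j = Fin.last n := Fin.ext (by have := j.isLt; simp [Fin.val_last]; omega)
    subst hj
    apply two_le_card
      (a := (⟨.ph s₁, rfl⟩ : {e : NA S n // (net S n).tail e = NV.pv (Fin.last n)}))
      (b := ⟨.ph s₂, rfl⟩)
    simp [Subtype.ext_iff, hs]

lemma outdeg_q (s₁ s₂ : S) (hs : s₁ ≠ s₂) (j : Fin (n + 1)) :
    2 ≤ (net S n).outDeg (.qv j) := by
  by_cases h : (j : ℕ) < n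
  · have hc : (Fin.castSucc (⟨(j : ℕ), h⟩ : Fin n)) = j := Fin.ext rfl
    apply two_le_card
      (a := (⟨.qa ⟨(j : ℕ), h⟩, by simp [ntail, hc]⟩ :
          {e : NA S n // (net S n).tail e = NV.qv j}))
      (b := ⟨.qb ⟨(j : ℕ), h⟩, by simp [ntail, hc]⟩)
    simp [Subtype.ext_iff]
  · have hj : j = Fin.last n := Fin.ext (by have := j.isLt; simp [Fin.val_last]; omega)
    subst hj
    apply two_le_card
      (a := (⟨.qh s₁, rfl⟩ : {e : NA S n // (net S n).tail e = NV.qv (Fin.last n)}))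
      (b := ⟨.qh s₂, rfl⟩)
    simp [Subtype.ext_iff, hs]

lemma indeg_a (i : Fin n) : 2 ≤ (net S n).inDeg (.av i) := by
  apply two_le_card (a := (⟨.pa i, rfl⟩ : {e : NA S n // (net S n).head e = NV.av i}))
    (b := ⟨.qa i, rfl⟩)
  simp [Subtype.ext_iff]

lemma indeg_b (i : Fin n) : 2 ≤ (net S n).inDeg (.bv i) := by
  apply two_le_card (a := (⟨.pb i, rfl⟩ : {e : NA S n // (net S n).head e = NV.bv i}))
    (b := ⟨.qb i, rfl⟩)
  simp [Subtype.ext_iff]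

lemma indeg_h (s : S) : 2 ≤ (net S n).inDeg (.hv s) := by
  apply two_le_card (a := (⟨.ph s, rfl⟩ : {e : NA S n // (net S n).head e = NV.hv s}))
    (b := ⟨.qh s, rfl⟩)
  simp [Subtype.ext_iff]

lemma indeg_lf (s : S) : (net S n).inDeg (.lf s) = 1 := by
  apply card_eq_one_of ⟨.hl s, rfl⟩
  rintro ⟨e, he⟩
  apply Subtype.ext
  show e = _
  cases e <;> simp_all [nhead] <;> omega

lemma outdeg_a (i : Fin n) : (net S n).outDeg (.av i) = 1 := by
  apply card_eq_one_of ⟨.ap i, rfl⟩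
  rintro ⟨e, he⟩
  apply Subtype.ext
  show e = _
  cases e <;> simp_all [ntail] <;> omega

lemma outdeg_b (i : Fin n) : (net S n).outDeg (.bv i) = 1 := by
  apply card_eq_one_of ⟨.bq i, rfl⟩
  rintro ⟨e, he⟩
  apply Subtype.ext
  show e = _
  cases e <;> simp_all [ntail] <;> omega

lemma outdeg_h (s : S) : (net S n).outDeg (.hv s) = 1 := by
  apply card_eq_one_of ⟨.hl s, rfl⟩
  rintro ⟨e, he⟩
  apply Subtype.ext
  show e = _
  cases e <;> simp_all [ntail] <;> omega

lemma outdeg_lf (s : S) : (net S n).outDeg (.lf s) = 0 := by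
  have : IsEmpty {e : NA S n // (net S n).tail e = NV.lf s} :=
    ⟨fun ⟨e, he⟩ => by cases e <;> simp [ntail] at he⟩
  exact Nat.card_of_isEmpty

/-- `net S n` is a phylogenetic network on the leaf set `range lf`. -/
lemma net_isNetwork (s₁ s₂ : S) (hs : s₁ ≠ s₂) :
    IsNetwork (net S n) (Set.range (NV.lf : S → NV S n)) NV.root where
  finV := inferInstance
  finE := inferInstance
  acyclic := net_acyclic
  root_in := indeg_root
  root_out := outdeg_root
  root_child := by
    rintro c ⟨e, he, rfl⟩
    cases e <;> first
      | exact ⟨indeg_top, outdeg_top⟩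
      | simp [ntail] at he
  leaf_iff := by
    intro v
    constructor
    · rintro ⟨s, rfl⟩
      exact ⟨outdeg_lf s, indeg_lf s⟩
    · rintro ⟨h1, h2⟩
      cases v with
      | root => rw [indeg_root] at h2; omega
      | top => have := outdeg_top (S := S) (n := n); omega
      | pv j => have := outdeg_p s₁ s₂ hs j; omega
      | qv j => have := outdeg_q s₁ s₂ hs j; omega
      | av i => rw [outdeg_a] at h1; omega
      | bv i => rw [outdeg_b] at h1; omega
      | hv s => rw [outdeg_h] at h1; omega
      | lf s => exact ⟨s, rfl⟩
  inner_deg := by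
    intro v hv hρ
    cases v with
    | root => exact absurd rfl hρ
    | top => exact Or.inl ⟨indeg_top, outdeg_top⟩
    | pv j => exact Or.inl ⟨indeg_p j, outdeg_p s₁ s₂ hs j⟩
    | qv j => exact Or.inl ⟨indeg_q j, outdeg_q s₁ s₂ hs j⟩
    | av i => exact Or.inr ⟨indeg_a i, outdeg_a i⟩
    | bv i => exact Or.inr ⟨indeg_b i, outdeg_b i⟩
    | hv s => exact Or.inr ⟨indeg_h s, outdeg_h s⟩
    | lf s => exact absurd ⟨s, rfl⟩ hv
  two_leaves := ⟨.lf s₁, .lf s₂, ⟨s₁, rfl⟩, ⟨s₂, rfl⟩, by simp [hs]⟩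

lemma net_leafLabeling :
    IsLeafLabeling (net S n) (Set.range (NV.lf : S → NV S n)) NV.lf where
  inj := fun a b h => by simpa using h
  mem := fun s => ⟨s, rfl⟩
  surj := fun v hv => hv

end Construction

/-! ### The reconciliation map -/

section Mu

variable {V S : Type} {n : ℕ}

open Classical in
/-- The reconciliation map: leaves go to the corresponding network leaves,
speciation vertices to chain vertices `pv` at their level, duplication vertices
to the arc from `pv` to `av` at their level. -/
noncomputable def muFun (lvT : Set V) (t : V → Event) (σ : V → S)
    (lvl : V → Fin n) : V → NV S n ⊕ NA S n := fun x =>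
  if x ∈ lvT then Sum.inl (.lf (σ x))
  else
    match t x with
    | .spec => Sum.inl (.pv (lvl x).castSucc)
    | .dupl => Sum.inr (.pa (lvl x))

lemma muFun_leaf {lvT : Set V} {t : V → Event} {σ : V → S} {lvl : V → Fin n}
    {x : V} (hx : x ∈ lvT) :
    muFun lvT t σ lvl x = Sum.inl (.lf (σ x)) := by
  simp [muFun, hx]

lemma muFun_spec {lvT : Set V} {t : V → Event} {σ : V → S} {lvl : V → Fin n}
    {x : V} (hx : x ∉ lvT) (ht : t x = Event.spec) :
    muFun lvT t σ lvl x = Sum.inl (.pv (lvl x).castSucc) := by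
  simp [muFun, hx, ht]

lemma muFun_dupl {lvT : Set V} {t : V → Event} {σ : V → S} {lvl : V → Fin n}
    {x : V} (hx : x ∉ lvT) (ht : t x = Event.dupl) :
    muFun lvT t σ lvl x = Sum.inr (.pa (lvl x)) := by
  simp [muFun, hx, ht]

end Mu

/-- For every event-labeled gene tree `(T;t,σ)` there exists a
    species network for `(T;t,σ)`, i.e. a network `N` on `𝕊` together with a
    TreeNet-reconciliation map from `(T;t,σ)` to `N`. -/
theorem exists_species_network {V E S : Type}
    (T : MGraph V E) (lvT : Set V) (ρT : V) (t : V → Event) (σ : V → S)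
    (hT : IsGeneTree T lvT ρT σ) :
    ∃ (W F : Type) (N : MGraph W F) (lvN : Set W) (ρN : W) (sp : S → W)
      (μ : V → W ⊕ F),
      IsNetwork N lvN ρN ∧ IsLeafLabeling N lvN sp ∧
        IsTreeNetRecon T lvT t σ N sp μ := by
  classical
  haveI hVfin : Finite V := hT.finV
  haveI hEfin : Finite E := hT.finE
  haveI hSfin : Finite S := by
    apply Finite.of_surjective σ
    intro s
    obtain ⟨g, -, hg⟩ := hT.sigma_surj s
    exact ⟨g, hg⟩
  obtain ⟨g₁, g₂, -, -, hgs⟩ := hT.sigma_nontriv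
  -- basic facts about the gene tree
  have hnostep : ∀ y ∈ lvT, ∀ c : V, ¬ T.Adj y c := by
    intro y hy c hc
    obtain ⟨e, he, -⟩ := hc
    have h0 : T.outDeg y = 0 := ((hT.leaf_iff y).1 hy).1
    exact absurd h0 (Nat.card_ne_zero.2 ⟨⟨⟨e, he⟩⟩, inferInstance⟩)
  have hleaf_no_desc : ∀ x y : V, y ∈ lvT → ¬ T.vlt x y := by
    intro x y hy hxy
    obtain ⟨hr, hne⟩ := hxy
    rcases Relation.ReflTransGen.cases_head hr with h | ⟨c, hc, -⟩
    · exact hne h.symm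
    · exact hnostep y hy c hc
  have hchild : ∀ x : V, x ∉ lvT → ∃ c, T.Adj x c := by
    intro x hx
    have hpos : 0 < T.outDeg x := by
      by_cases hρ : x = ρT
      · subst hρ; have := hT.root_out; omega
      · have := (hT.inner_deg x hx hρ).2; omega
    obtain ⟨⟨e, he⟩⟩ := (Nat.card_pos_iff.1 hpos).1
    exact ⟨T.head e, e, he, rfl⟩
  have hadj_vlt : ∀ {x c : V}, T.Adj x c → T.vlt c x := by
    intro x c h
    refine ⟨Relation.ReflTransGen.single h, ?_⟩
    rintro rfl
    exact hT.acyclic c (Relation.TransGen.single h)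
  -- levels
  have hdb : ∀ x : V, depth T x ≤ Nat.card V := fun x => depth_le T x
  set L : ℕ := Nat.card V with hL
  have hdb' : ∀ x : V, depth T x ≤ L := fun x => hdb x
  let lvl : V → Fin (2 * L + 2) := fun x => ⟨2 * depth T x, by have := hdb' x; omega⟩
  have hlv2 : ∀ z : V, ((lvl z : Fin (2 * L + 2)) : ℕ) = 2 * depth T z := fun z => rfl
  have hlv : ∀ z : V, (((lvl z).castSucc : Fin (2 * L + 3)) : ℕ) = 2 * depth T z :=
    fun z => rfl
  -- the key order-preservation lemma
  have hkey : ∀ x y : V, T.vlt x y →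
      (net S (2 * L + 2)).slt (muFun lvT t σ lvl x) (muFun lvT t σ lvl y) := by
    intro x y hxy
    have hy : y ∉ lvT := fun h => hleaf_no_desc x y h hxy
    have hd : depth T y < depth T x := depth_lt hT.acyclic hxy
    by_cases hx : x ∈ lvT
    · rw [muFun_leaf hx]
      cases hty : t y with
      | spec =>
          rw [muFun_spec hy hty]
          exact ⟨reach_p_leaf _ _, by simp⟩
      | dupl =>
          rw [muFun_dupl hy hty]
          exact reach_A_leaf _ _
    · cases htx : t x with
      | spec =>
          rw [muFun_spec hx htx]
          cases hty : t y with
          | spec =>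
              rw [muFun_spec hy hty]
              refine ⟨reach_p_p _ _ ?_, ?_⟩
              · simp only [hlv]; omega
              · simp only [ne_eq, NV.pv.injEq, Fin.ext_iff, hlv]; omega
          | dupl =>
              rw [muFun_dupl hy hty]
              exact reach_A_p _ _ (by simp only [hlv, hlv2]; omega)
      | dupl =>
          rw [muFun_dupl hx htx]
          cases hty : t y with
          | spec =>
              rw [muFun_spec hy hty]
              exact reach_p_p _ _ (by simp only [hlv]; omega)
          | dupl =>
              rw [muFun_dupl hy hty]
              refine ⟨⟨Relation.ReflTransGen.single (adj_p_a _), by simp [nhead, ntail]⟩,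
                reach_A_p _ _ (by simp only [hlv, hlv2]; omega),
                ⟨Relation.ReflTransGen.single (adj_p_a _), by simp [nhead, ntail]⟩⟩
  refine ⟨NV S (2 * L + 2), NA S (2 * L + 2), net S (2 * L + 2),
    Set.range NV.lf, NV.root, NV.lf, muFun lvT t σ lvl,
    net_isNetwork (σ g₁) (σ g₂) hgs, net_leafLabeling, ?_⟩
  constructor
  · intro x hx
    exact muFun_leaf hx
  · intro x hx ht
    obtain ⟨c, hc⟩ := hchild x hx
    have hdc : depth T x < depth T c := depth_lt hT.acyclic (hadj_vlt hc)
    refine ⟨.pv (lvl x).castSucc, muFun_spec hx ht, c, c, hc, hc, ?_⟩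
    refine ⟨.av (lvl x), .bv (lvl x), by simp, adj_p_a _, adj_p_b _, ?_, ?_⟩
    · by_cases hcl : c ∈ lvT
      · rw [muFun_leaf hcl]
        exact reach_A_leaf _ _
      · cases htc : t c with
        | spec =>
            rw [muFun_spec hcl htc]
            exact reach_A_p _ _ (by simp only [hlv, hlv2]; omega)
        | dupl =>
            rw [muFun_dupl hcl htc]
            exact reach_A_A _ _ (by simp only [hlv2]; omega)
    · by_cases hcl : c ∈ lvT
      · rw [muFun_leaf hcl]
        exact reach_B_leaf _ _
      · cases htc : t c with
        | spec =>
            rw [muFun_spec hcl htc]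
            exact reach_B_p _ _ (by simp only [hlv, hlv2]; omega)
        | dupl =>
            rw [muFun_dupl hcl htc]
            exact reach_B_A _ _ (by simp only [hlv2]; omega)
  · intro x hx ht
    exact ⟨.pa (lvl x), muFun_dupl hx ht⟩
  · intro x y h _ _ _ _
    exact Or.inr (hkey x y h)
  · intro x y h _
    exact hkey x y h

end Phylo
end

section
/- Let (T;t,σ) be an event-labeled gene tree, let N be a multi-arc free species network on 𝕊, let μ be a TreeNet-reconciliation map from (T;t,σ) to N, and let (M,χ) be a pseudo MUL-tree that can be folded via a folding map f=(f_V,f_E) to N. Then there exists a MUL-reconciliation map from (T;t,σ) to (M,χ) (namely the lifting κ_{μ,f} of μ along f). -/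
namespace Phylo

variable {V E W F D U S : Type}

/-- A folding map `f = (fV, fE)` from a pseudo MUL-tree `(M,χ)` (with leaf set `lvM`)
    to the network `N` (with species labeling `sp`):
    (F1) `fV` and `fE` are compatible with tails and heads;
    (F2) each leaf of `M` is mapped to the species labeling it;
    (F3) each arc of `N` lifts uniquely at each preimage of its tail. -/
structure IsFoldingMap (M : MGraph D U) (lvM : Set D) (χ : S → Set D)
    (N : MGraph W F) (sp : S → W) (fV : D → W) (fE : U → F) : Prop where
  fV_surj : Function.Surjective fV
  fE_surj : Function.Surjective fE
  F1t : ∀ a : U, N.tail (fE a) = fV (M.tail a)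
  F1h : ∀ a : U, N.head (fE a) = fV (M.head a)
  F2 : ∀ v ∈ lvM, ∀ x : S, v ∈ χ x → fV v = sp x
  F3 : ∀ (a : F) (v : D), fV v = N.tail a → ∃! b : U, fE b = a ∧ M.tail b = v


/-! ### Auxiliary development for the lifting construction -/

section AuxGraphLemmas

namespace MGraph

variable {V E : Type} {G : MGraph V E}

theorem Acyclic.no_loop (h : G.Acyclic) {u v : V} (h1 : G.Reach u v) (h2 : G.Adj v u) : False :=
  h v (Relation.TransGen.head' h2 h1)

theorem Acyclic.reach_antisymm (h : G.Acyclic) {u v : V} (h1 : G.Reach u v)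
    (h2 : G.Reach v u) : u = v := by
  rcases Relation.reflTransGen_iff_eq_or_transGen.mp h1 with heq | ht
  · exact heq.symm
  · rcases Relation.reflTransGen_iff_eq_or_transGen.mp h2 with heq | ht2
    · exact heq
    · exact absurd (Relation.TransGen.trans ht ht2) (h u)

theorem Acyclic.head_ne_tail (h : G.Acyclic) (e : E) : G.head e ≠ G.tail e := fun he =>
  h (G.tail e) (Relation.TransGen.single ⟨e, rfl, he⟩)

theorem reach_tpt_hpt (G : MGraph V E) (k : V ⊕ E) : G.Reach (G.tpt k) (G.hpt k) := by
  cases k with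
  | inl v => exact Relation.ReflTransGen.refl
  | inr e => exact Relation.ReflTransGen.single ⟨e, rfl, rfl⟩

theorem slt_iff (h : G.Acyclic) {a b : V ⊕ E} :
    G.slt a b ↔ G.Reach (G.hpt b) (G.tpt a) ∧ a ≠ b := by
  cases a with
  | inl x =>
    cases b with
    | inl y =>
      constructor
      · intro h1
        exact ⟨h1.1, fun hc => h1.2 (by injection hc)⟩
      · intro h1
        exact ⟨h1.1, fun hc => h1.2 (by rw [hc])⟩
    | inr e =>
      constructor
      · intro h1; exact ⟨h1, fun hc => (by cases hc)⟩
      · intro h1; exact h1.1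
  | inr e =>
    cases b with
    | inl y =>
      constructor
      · intro h1; exact ⟨h1, fun hc => (by cases hc)⟩
      · intro h1; exact h1.1
    | inr f =>
      constructor
      · intro h1
        refine ⟨h1.2.1, fun hc => ?_⟩
        obtain rfl : e = f := by injection hc
        exact h.no_loop h1.2.1 ⟨e, rfl, rfl⟩
      · intro h1
        exact ⟨⟨Relation.ReflTransGen.single ⟨e, rfl, rfl⟩, h.head_ne_tail e⟩, h1.1,
          ⟨Relation.ReflTransGen.single ⟨f, rfl, rfl⟩, h.head_ne_tail f⟩⟩

theorem slt_irrefl (h : G.Acyclic) (a : V ⊕ E) : ¬ G.slt a a := fun hs =>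
  ((slt_iff h).mp hs).2 rfl

theorem slt_trans (h : G.Acyclic) {a b c : V ⊕ E} (h1 : G.slt a b) (h2 : G.slt b c) :
    G.slt a c := by
  rw [slt_iff h] at h1 h2 ⊢
  obtain ⟨r1, ne1⟩ := h1
  obtain ⟨r2, ne2⟩ := h2
  refine ⟨r2.trans ((G.reach_tpt_hpt b).trans r1), ?_⟩
  rintro rfl
  have e1 : G.tpt a = G.hpt a :=
    h.reach_antisymm (G.reach_tpt_hpt a) (r2.trans ((G.reach_tpt_hpt b).trans r1))
  have e2 : G.hpt a = G.tpt b :=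
    h.reach_antisymm r2 ((G.reach_tpt_hpt b).trans (r1.trans (G.reach_tpt_hpt a)))
  cases a with
  | inl x =>
    cases b with
    | inl y =>
      have hxy : x = y := e2
      exact ne1 (by rw [hxy])
    | inr f =>
      have e3 : G.tpt (Sum.inr f) = G.hpt (Sum.inr f) :=
        h.reach_antisymm (G.reach_tpt_hpt (Sum.inr f)) (r1.trans ((G.reach_tpt_hpt (Sum.inl x)).trans r2))
      have hf : G.tail f = G.head f := e3
      exact h.head_ne_tail f hf.symm
  | inr e =>
    have he : G.tail e = G.head e := e1
    exact h.head_ne_tail e he.symm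

theorem sle_trans (h : G.Acyclic) {a b c : V ⊕ E} (h1 : G.sle a b) (h2 : G.sle b c) :
    G.sle a c := by
  rcases h1 with rfl | h1
  · exact h2
  · rcases h2 with rfl | h2
    · exact Or.inr h1
    · exact Or.inr (slt_trans h h1 h2)

theorem slt_of_slt_of_sle (h : G.Acyclic) {a b c : V ⊕ E} (h1 : G.slt a b) (h2 : G.sle b c) :
    G.slt a c := by
  rcases h2 with rfl | h2
  · exact h1
  · exact slt_trans h h1 h2

theorem slt_of_sle_of_slt (h : G.Acyclic) {a b c : V ⊕ E} (h1 : G.sle a b) (h2 : G.slt b c) :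
    G.slt a c := by
  rcases h1 with rfl | h1
  · exact h2
  · exact slt_trans h h1 h2

theorem Acyclic.wf_adj (hfin : Finite V) (h : G.Acyclic) : WellFounded G.Adj := by
  haveI := hfin
  haveI : IsIrrefl V (Relation.TransGen G.Adj) := ⟨h⟩
  exact Subrelation.wf (fun {a b} hab => Relation.TransGen.single hab)
    (Finite.wellFounded_of_trans_of_irrefl _)

end MGraph

end AuxGraphLemmas

section AuxCard

theorem exists_pair_of_two_le_card {α : Type} [Finite α] (h : 2 ≤ Nat.card α) :
    ∃ a b : α, a ≠ b := by
  by_contra hc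
  push_neg at hc
  haveI : Subsingleton α := ⟨fun a b => hc a b⟩
  rcases isEmpty_or_nonempty α with he | hn
  · rw [Nat.card_of_isEmpty] at h; omega
  · obtain ⟨a⟩ := hn
    rw [Nat.card_of_subsingleton a] at h; omega

theorem card_ne_one_of_pair {α : Type} {a b : α} (hab : a ≠ b) : Nat.card α ≠ 1 := fun h =>
  hab ((Nat.card_eq_one_iff_unique.mp h).1.allEq a b)

end AuxCard

theorem Event.spec_ne_dupl : Event.spec ≠ Event.dupl := fun h => Event.noConfusion h

section AuxLift

variable {V E W F D U S : Type}

theorem vlt_of_adj {T : MGraph V E} (hac : T.Acyclic) {x y : V} (h : T.Adj y x) : T.vlt x y := by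
  refine ⟨Relation.ReflTransGen.single h, fun he => hac x (Relation.TransGen.single ?_)⟩
  subst he
  exact h

theorem in_arc_unique {T : MGraph V E} {lvT : Set V} {ρT : V} {σ : V → S}
    (hT : IsGeneTree T lvT ρT σ) {x : V} {e f : E} (he : T.head e = x) (hf : T.head f = x) :
    e = f := by
  haveI := hT.finE
  have hdeg : T.inDeg x = 1 := by
    by_cases hρ : x = ρT
    · exfalso
      have h0 : T.inDeg x = 0 := by rw [hρ]; exact hT.root_in
      rcases Nat.card_eq_zero.mp h0 with hemp | hinf
      · exact hemp.false ⟨e, he⟩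
      · haveI := hinf
        exact not_finite {g : E // T.head g = x}
    · by_cases hl : x ∈ lvT
      · exact ((hT.leaf_iff x).mp hl).2
      · exact (hT.inner_deg x hl hρ).1
  obtain ⟨hsub, -⟩ := Nat.card_eq_one_iff_unique.mp hdeg
  exact congrArg Subtype.val (hsub.allEq (⟨e, he⟩ : {g : E // T.head g = x}) ⟨f, hf⟩)

theorem lift_reach {M : MGraph D U} {lvM : Set D} {χ : S → Set D} {N : MGraph W F}
    {sp : S → W} {fV : D → W} {fE : U → F} (hf : IsFoldingMap M lvM χ N sp fV fE)
    (v : D) {w : W} (h : N.Reach (fV v) w) : ∃ d : D, fV d = w ∧ M.Reach v d := by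
  induction h with
  | refl => exact ⟨v, rfl, Relation.ReflTransGen.refl⟩
  | tail hr hadj ih =>
    obtain ⟨d, hd, hvd⟩ := ih
    obtain ⟨g, hgt, hgh⟩ := hadj
    obtain ⟨b, ⟨hbe, hbt⟩, -⟩ := hf.F3 g d (hd.trans hgt.symm)
    refine ⟨M.head b, ?_, hvd.trans (Relation.ReflTransGen.single ⟨b, hbt, rfl⟩)⟩
    rw [← hf.F1h, hbe]
    exact hgh

theorem lift_transGen {M : MGraph D U} {lvM : Set D} {χ : S → Set D} {N : MGraph W F}
    {sp : S → W} {fV : D → W} {fE : U → F} (hf : IsFoldingMap M lvM χ N sp fV fE)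
    (v : D) {w : W} (h : Relation.TransGen N.Adj (fV v) w) :
    ∃ b : U, fV (M.head b) = w ∧ M.Reach v (M.tail b) := by
  obtain ⟨u, hru, hadj⟩ := Relation.TransGen.tail'_iff.mp h
  obtain ⟨d, hd, hvd⟩ := lift_reach hf v hru
  obtain ⟨g, hgt, hgh⟩ := hadj
  obtain ⟨b, ⟨hbe, hbt⟩, -⟩ := hf.F3 g d (hd.trans hgt.symm)
  refine ⟨b, ?_, ?_⟩
  · rw [← hf.F1h, hbe]; exact hgh
  · rw [hbt]; exact hvd

/-- The invariant carried by the lifting: `k` is a lift of `μ x` (head-wise). -/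
def LiftP (N : MGraph W F) (M : MGraph D U) (fV : D → W) (μ : V → W ⊕ F) (x : V)
    (k : D ⊕ U) : Prop :=
  fV (M.hpt k) = N.hpt (μ x) ∧ (∀ w, μ x = Sum.inl w → ∃ d, k = Sum.inl d) ∧
    (∀ e, μ x = Sum.inr e → ∃ b, k = Sum.inr b)

/-- The full data stored at a vertex: the lift plus, for speciation vertices,
    a pair of distinct children together with distinct routing arcs. -/
def GoodAt (T : MGraph V E) (lvT : Set V) (t : V → Event) (N : MGraph W F) (M : MGraph D U)
    (fV : D → W) (μ : V → W ⊕ F) (x : V) (p : (D ⊕ U) × Option (V × V × U × U)) : Prop :=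
  LiftP N M fV μ x p.1 ∧
  (∀ (_ : x ∉ lvT) (_ : t x = Event.spec), ∃ q : V × V × U × U, p.2 = some q ∧
    ∃ d, p.1 = Sum.inl d ∧ T.Adj x q.1 ∧ T.Adj x q.2.1 ∧ q.1 ≠ q.2.1 ∧
      M.tail q.2.2.1 = d ∧ M.tail q.2.2.2 = d ∧ q.2.2.1 ≠ q.2.2.2 ∧
      N.Reach (fV (M.head q.2.2.1)) (N.hpt (μ q.1)) ∧
      N.Reach (fV (M.head q.2.2.2)) (N.hpt (μ q.2.1))) ∧
  (¬(x ∉ lvT ∧ t x = Event.spec) → p.2 = none)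

/-- The relation between the value at a vertex and the value at its parent. -/
def StepRelP (M : MGraph D U) (μ : V → W ⊕ F) (x y : V) (k : D ⊕ U)
    (py : (D ⊕ U) × Option (V × V × U × U)) : Prop :=
  ((μ x = μ y ∧ k = py.1) ∨ (M.Reach (M.hpt py.1) (M.tpt k) ∧ k ≠ py.1)) ∧
  (∀ q : V × V × U × U, py.2 = some q →
    (x = q.1 → M.Reach (M.head q.2.2.1) (M.hpt k)) ∧
    (x = q.2.1 → M.Reach (M.head q.2.2.2) (M.hpt k)))

theorem slt_route {N : MGraph W F} {mx my : W ⊕ F} (h : N.slt mx my) :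
    (∀ w', mx = Sum.inl w' → N.Reach (N.hpt my) w' ∧ ∀ w, my = Sum.inl w → w' ≠ w) ∧
    (∀ e', mx = Sum.inr e' → Relation.TransGen N.Adj (N.hpt my) (N.head e')) := by
  constructor
  · rintro w' rfl
    cases my with
    | inl w =>
      exact ⟨h.1, fun w₀ hw₀ => by injection hw₀ with hh; rw [hh] at h; exact h.2⟩
    | inr e => exact ⟨h, fun w₀ hw₀ => (by cases hw₀)⟩
  · rintro e' rfl
    cases my with
    | inl w => exact Relation.TransGen.tail' h ⟨e', rfl, rfl⟩
    | inr e => exact Relation.TransGen.tail' h.2.1 ⟨e', rfl, rfl⟩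

theorem slt_inl_transGen {N : MGraph W F} {m : W ⊕ F} {w : W} (h : N.slt m (Sum.inl w)) :
    Relation.TransGen N.Adj w (N.hpt m) := by
  cases m with
  | inl w' =>
    rcases Relation.reflTransGen_iff_eq_or_transGen.mp h.1 with heq | ht
    · exact absurd heq h.2
    · exact ht
  | inr e' => exact Relation.TransGen.tail' h ⟨e', rfl, rfl⟩

theorem inl_ne_py1 {N : MGraph W F} {M : MGraph D U} {fV : D → W} {μ : V → W ⊕ F}
    {x y : V} {py1 : D ⊕ U} (hL : LiftP N M fV μ y py1) (hslt : N.slt (μ x) (μ y))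
    {w' : W} (hmx : μ x = Sum.inl w') {d' : D} (hd' : fV d' = w') :
    Sum.inl d' ≠ py1 := by
  intro hcon
  cases hmy : μ y with
  | inl w =>
    obtain ⟨d₀, hd₀⟩ := hL.2.1 w hmy
    have hdd : d' = d₀ := by
      rw [hd₀] at hcon
      exact Sum.inl.inj hcon
    have hfd₀ : fV d₀ = w := by
      have h1 := hL.1
      rw [hd₀, hmy] at h1
      exact h1
    have hww : w' = w := by rw [← hd', hdd]; exact hfd₀
    rw [hmx, hmy] at hslt
    exact hslt.2 hww
  | inr e =>
    obtain ⟨b₀, hb₀⟩ := hL.2.2 e hmy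
    rw [hb₀] at hcon
    exact (by cases hcon)

theorem inr_ne_py1 {M : MGraph D U} (hMac : M.Acyclic) {py1 : D ⊕ U} {b' : U}
    (hrb : M.Reach (M.hpt py1) (M.tail b')) : Sum.inr b' ≠ py1 := by
  intro hcon
  rw [← hcon] at hrb
  exact hMac.no_loop hrb ⟨b', rfl, rfl⟩

theorem exists_baseLift {M : MGraph D U} {lvM : Set D} {χ : S → Set D} {N : MGraph W F}
    {sp : S → W} {fV : D → W} {fE : U → F} (hf : IsFoldingMap M lvM χ N sp fV fE)
    (μ : V → W ⊕ F) (x : V) : ∃ k, LiftP N M fV μ x k := by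
  cases hm : μ x with
  | inl w =>
    obtain ⟨d, hd⟩ := hf.fV_surj w
    refine ⟨Sum.inl d, ?_, fun w' _ => ⟨d, rfl⟩,
      fun e he => absurd (hm.symm.trans he) (fun hc => (by cases hc))⟩
    rw [hm]
    exact hd
  | inr e =>
    obtain ⟨b, hb⟩ := hf.fE_surj e
    refine ⟨Sum.inr b, ?_, fun w hw => absurd (hm.symm.trans hw) (fun hc => (by cases hc)),
      fun e' _ => ⟨b, rfl⟩⟩
    show fV (M.head b) = N.hpt (μ x)
    rw [hm, ← hf.F1h, hb]
    rfl

theorem exists_specData {T : MGraph V E} {lvT : Set V} {ρT : V} {t : V → Event} {σ : V → S}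
    {N : MGraph W F} {lvN : Set W} {ρN : W} {sp : S → W}
    {M : MGraph D U} {lvM : Set D} {χ : S → Set D} {fV : D → W} {fE : U → F} {μ : V → W ⊕ F}
    (hT : IsGeneTree T lvT ρT σ) (hN : IsNetwork N lvN ρN)
    (hμ : IsTreeNetRecon T lvT t σ N sp μ) (hf : IsFoldingMap M lvM χ N sp fV fE)
    (x : V) (hx : x ∉ lvT) (hs : t x = Event.spec) (k : D ⊕ U) (hk : LiftP N M fV μ x k) :
    ∃ q : V × V × U × U, ∃ d : D, k = Sum.inl d ∧ T.Adj x q.1 ∧ T.Adj x q.2.1 ∧ q.1 ≠ q.2.1 ∧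
      M.tail q.2.2.1 = d ∧ M.tail q.2.2.2 = d ∧ q.2.2.1 ≠ q.2.2.2 ∧
      N.Reach (fV (M.head q.2.2.1)) (N.hpt (μ q.1)) ∧
      N.Reach (fV (M.head q.2.2.2)) (N.hpt (μ q.2.1)) := by
  obtain ⟨w, hw, c₁, c₂, hc₁, hc₂, hQ⟩ := hμ.R2i x hx hs
  obtain ⟨u₁, u₂, hu12, hadj1, hadj2, hr1, hr2⟩ := hQ
  obtain ⟨d, hd⟩ := hk.2.1 w hw
  have hfVd : fV d = w := by
    have h1 := hk.1
    rw [hd, hw] at h1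
    exact h1
  have key : ∃ (cA cB : V) (gA gB : F), T.Adj x cA ∧ T.Adj x cB ∧ cA ≠ cB ∧
      N.tail gA = w ∧ N.tail gB = w ∧ N.head gA ≠ N.head gB ∧
      N.Reach (N.head gA) (N.hpt (μ cA)) ∧ N.Reach (N.head gB) (N.hpt (μ cB)) := by
    obtain ⟨g₁, hg₁t, hg₁h⟩ := hadj1
    obtain ⟨g₂, hg₂t, hg₂h⟩ := hadj2
    by_cases hcc : c₁ = c₂
    · subst hcc
      have hout : 2 ≤ T.outDeg x := by
        by_cases hρ : x = ρT
        · rw [hρ]; exact hT.root_out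
        · exact (hT.inner_deg x hx hρ).2
      haveI := hT.finE
      obtain ⟨e₁, e₂, hee⟩ := exists_pair_of_two_le_card (α := {e : E // T.tail e = x}) hout
      have hch : T.head e₁.1 ≠ T.head e₂.1 := fun hh =>
        hee (Subtype.ext (hT.multiarc_free e₁.1 e₂.1 (e₁.2.trans e₂.2.symm) hh))
      obtain ⟨c', hc', hcne⟩ : ∃ c', T.Adj x c' ∧ c' ≠ c₁ := by
        by_cases h1 : T.head e₁.1 = c₁
        · exact ⟨T.head e₂.1, ⟨e₂.1, e₂.2, rfl⟩, fun hc => hch (h1.trans hc.symm)⟩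
        · exact ⟨T.head e₁.1, ⟨e₁.1, e₁.2, rfl⟩, h1⟩
      have hvlt' := vlt_of_adj hT.acyclic hc'
      have hslt' : N.slt (μ c') (μ x) :=
        hμ.R3s c' x hvlt' (fun hbd => Event.spec_ne_dupl (hs.symm.trans hbd.2.2.2))
      rw [hw] at hslt'
      have htg := slt_inl_transGen hslt'
      obtain ⟨u', hadj', hru'⟩ := Relation.TransGen.head'_iff.mp htg
      obtain ⟨g', hg't, hg'h⟩ := hadj'
      by_cases huu : u' = u₁
      · refine ⟨c', c₁, g', g₂, hc', hc₁, hcne, hg't, hg₂t, ?_, ?_, ?_⟩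
        · rw [hg'h, hg₂h, huu]; exact hu12
        · rw [hg'h]; exact hru'
        · rw [hg₂h]; exact hr2
      · refine ⟨c', c₁, g', g₁, hc', hc₁, hcne, hg't, hg₁t, ?_, ?_, ?_⟩
        · rw [hg'h, hg₁h]; exact huu
        · rw [hg'h]; exact hru'
        · rw [hg₁h]; exact hr1
    · exact ⟨c₁, c₂, g₁, g₂, hc₁, hc₂, hcc, hg₁t, hg₂t,
        by rw [hg₁h, hg₂h]; exact hu12, by rw [hg₁h]; exact hr1, by rw [hg₂h]; exact hr2⟩
  obtain ⟨cA, cB, gA, gB, hcA, hcB, hcAB, hgAt, hgBt, hgh, hrA, hrB⟩ := key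
  obtain ⟨bA, ⟨hbAe, hbAt⟩, -⟩ := hf.F3 gA d (hfVd.trans hgAt.symm)
  obtain ⟨bB, ⟨hbBe, hbBt⟩, -⟩ := hf.F3 gB d (hfVd.trans hgBt.symm)
  have hbAB : bA ≠ bB := by
    intro hcon
    apply hgh
    rw [← hbAe, ← hbBe, hcon]
  refine ⟨(cA, cB, bA, bB), d, hd, hcA, hcB, hcAB, hbAt, hbBt, hbAB, ?_, ?_⟩
  · show N.Reach (fV (M.head bA)) (N.hpt (μ cA))
    rw [← hf.F1h, hbAe]
    exact hrA
  · show N.Reach (fV (M.head bB)) (N.hpt (μ cB))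
    rw [← hf.F1h, hbBe]
    exact hrB

theorem exists_stepLift {T : MGraph V E} {lvT : Set V} {ρT : V} {t : V → Event} {σ : V → S}
    {N : MGraph W F} {lvN : Set W} {ρN : W} {sp : S → W}
    {M : MGraph D U} {lvM : Set D} {ρM : D} {χ : S → Set D}
    {fV : D → W} {fE : U → F} {μ : V → W ⊕ F}
    (hT : IsGeneTree T lvT ρT σ) (hN : IsNetwork N lvN ρN)
    (hμ : IsTreeNetRecon T lvT t σ N sp μ) (hM : IsPMULTree M lvM ρM χ)
    (hf : IsFoldingMap M lvM χ N sp fV fE)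
    {x y : V} (hadj : T.Adj y x) (py : (D ⊕ U) × Option (V × V × U × U))
    (hpy : GoodAt T lvT t N M fV μ y py) :
    ∃ k, LiftP N M fV μ x k ∧ StepRelP M μ x y k py := by
  have hL := hpy.1
  by_cases hμeq : μ x = μ y
  · refine ⟨py.1, ⟨by rw [hμeq]; exact hL.1, fun w hw => hL.2.1 w (by rw [← hμeq]; exact hw),
      fun e he => hL.2.2 e (by rw [← hμeq]; exact he)⟩, Or.inl ⟨hμeq, rfl⟩, ?_⟩
    intro q hq
    exfalso
    have hyspec : y ∉ lvT ∧ t y = Event.spec := by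
      by_contra hn
      rw [hpy.2.2 hn] at hq
      exact (by cases hq)
    have hvlt := vlt_of_adj hT.acyclic hadj
    have hs := hμ.R3s x y hvlt (fun hbd => Event.spec_ne_dupl (hyspec.2.symm.trans hbd.2.2.2))
    rw [hμeq] at hs
    exact MGraph.slt_irrefl hN.acyclic _ hs
  · have hvlt := vlt_of_adj hT.acyclic hadj
    have hslt : N.slt (μ x) (μ y) := by
      by_cases hbd : x ∉ lvT ∧ y ∉ lvT ∧ t x = Event.dupl ∧ t y = Event.dupl
      · rcases hμ.R3d x y hvlt hbd.1 hbd.2.1 hbd.2.2.1 hbd.2.2.2 with heq | hlt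
        · exact absurd heq hμeq
        · exact hlt
      · exact hμ.R3s x y hvlt hbd
    have hroute := slt_route hslt
    by_cases hyspec : y ∉ lvT ∧ t y = Event.spec
    · obtain ⟨q, hq2, d, hq1, hAdjA, hAdjB, hABne, htA, htB, hbne, hRA, hRB⟩ :=
        hpy.2.1 hyspec.1 hyspec.2
      have hfVd : fV d = N.hpt (μ y) := by
        have h1 := hL.1
        rw [hq1] at h1
        exact h1
      by_cases hxA : x = q.1
      · rw [← hxA] at hRA
        cases hmx : μ x with
        | inl w' =>
          rw [hmx] at hRA
          obtain ⟨d', hd', hrd'⟩ := lift_reach hf (M.head q.2.2.1) hRA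
          refine ⟨Sum.inl d', ⟨by rw [hmx]; exact hd', fun _ _ => ⟨d', rfl⟩,
              fun e he => absurd (hmx.symm.trans he) (fun hc => (by cases hc))⟩,
            Or.inr ⟨?_, inl_ne_py1 hL hslt hmx hd'⟩, ?_⟩
          · rw [hq1]
            show M.Reach d d'
            exact Relation.ReflTransGen.trans (Relation.ReflTransGen.single ⟨q.2.2.1, htA, rfl⟩) hrd'
          · intro q' hq'
            rw [hq2] at hq'
            obtain rfl : q = q' := Option.some.inj hq'
            exact ⟨fun _ => hrd', fun hxB => absurd (hxA.symm.trans hxB) hABne⟩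
        | inr e' =>
          rw [hmx] at hRA
          rcases Relation.reflTransGen_iff_eq_or_transGen.mp hRA with heq | htg
          · refine ⟨Sum.inr q.2.2.1, ⟨by rw [hmx]; exact heq.symm,
                fun w hw => absurd (hmx.symm.trans hw) (fun hc => (by cases hc)),
                fun _ _ => ⟨q.2.2.1, rfl⟩⟩, Or.inr ⟨?_, ?_⟩, ?_⟩
            · rw [hq1]
              show M.Reach d (M.tail q.2.2.1)
              rw [htA]
              exact Relation.ReflTransGen.refl
            · rw [hq1]; exact fun hc => (by cases hc)
            · intro q' hq'
              rw [hq2] at hq'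
              obtain rfl : q = q' := Option.some.inj hq'
              exact ⟨fun _ => Relation.ReflTransGen.refl, fun hxB => absurd (hxA.symm.trans hxB) hABne⟩
          · obtain ⟨b', hb'h, hb'r⟩ := lift_transGen hf (M.head q.2.2.1) htg
            refine ⟨Sum.inr b', ⟨by rw [hmx]; exact hb'h,
                fun w hw => absurd (hmx.symm.trans hw) (fun hc => (by cases hc)),
                fun _ _ => ⟨b', rfl⟩⟩, Or.inr ⟨?_, ?_⟩, ?_⟩
            · rw [hq1]
              show M.Reach d (M.tail b')
              exact Relation.ReflTransGen.trans (Relation.ReflTransGen.single ⟨q.2.2.1, htA, rfl⟩) hb'r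
            · rw [hq1]; exact fun hc => (by cases hc)
            · intro q' hq'
              rw [hq2] at hq'
              obtain rfl : q = q' := Option.some.inj hq'
              refine ⟨fun _ => ?_, fun hxB => absurd (hxA.symm.trans hxB) hABne⟩
              show M.Reach (M.head q.2.2.1) (M.head b')
              exact hb'r.trans (Relation.ReflTransGen.single ⟨b', rfl, rfl⟩)
      · by_cases hxB : x = q.2.1
        · rw [← hxB] at hRB
          cases hmx : μ x with
          | inl w' =>
            rw [hmx] at hRB
            obtain ⟨d', hd', hrd'⟩ := lift_reach hf (M.head q.2.2.2) hRB
            refine ⟨Sum.inl d', ⟨by rw [hmx]; exact hd', fun _ _ => ⟨d', rfl⟩,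
                fun e he => absurd (hmx.symm.trans he) (fun hc => (by cases hc))⟩,
              Or.inr ⟨?_, inl_ne_py1 hL hslt hmx hd'⟩, ?_⟩
            · rw [hq1]
              show M.Reach d d'
              exact Relation.ReflTransGen.trans (Relation.ReflTransGen.single ⟨q.2.2.2, htB, rfl⟩) hrd'
            · intro q' hq'
              rw [hq2] at hq'
              obtain rfl : q = q' := Option.some.inj hq'
              exact ⟨fun hxA' => absurd (hxA'.symm.trans hxB) hABne, fun _ => hrd'⟩
          | inr e' =>
            rw [hmx] at hRB
            rcases Relation.reflTransGen_iff_eq_or_transGen.mp hRB with heq | htg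
            · refine ⟨Sum.inr q.2.2.2, ⟨by rw [hmx]; exact heq.symm,
                  fun w hw => absurd (hmx.symm.trans hw) (fun hc => (by cases hc)),
                  fun _ _ => ⟨q.2.2.2, rfl⟩⟩, Or.inr ⟨?_, ?_⟩, ?_⟩
              · rw [hq1]
                show M.Reach d (M.tail q.2.2.2)
                rw [htB]
                exact Relation.ReflTransGen.refl
              · rw [hq1]; exact fun hc => (by cases hc)
              · intro q' hq'
                rw [hq2] at hq'
                obtain rfl : q = q' := Option.some.inj hq'
                exact ⟨fun hxA' => absurd (hxA'.symm.trans hxB) hABne,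
                  fun _ => Relation.ReflTransGen.refl⟩
            · obtain ⟨b', hb'h, hb'r⟩ := lift_transGen hf (M.head q.2.2.2) htg
              refine ⟨Sum.inr b', ⟨by rw [hmx]; exact hb'h,
                  fun w hw => absurd (hmx.symm.trans hw) (fun hc => (by cases hc)),
                  fun _ _ => ⟨b', rfl⟩⟩, Or.inr ⟨?_, ?_⟩, ?_⟩
              · rw [hq1]
                show M.Reach d (M.tail b')
                exact Relation.ReflTransGen.trans (Relation.ReflTransGen.single ⟨q.2.2.2, htB, rfl⟩) hb'r
              · rw [hq1]; exact fun hc => (by cases hc)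
              · intro q' hq'
                rw [hq2] at hq'
                obtain rfl : q = q' := Option.some.inj hq'
                refine ⟨fun hxA' => absurd (hxA'.symm.trans hxB) hABne, fun _ => ?_⟩
                show M.Reach (M.head q.2.2.2) (M.head b')
                exact hb'r.trans (Relation.ReflTransGen.single ⟨b', rfl, rfl⟩)
        · cases hmx : μ x with
          | inl w' =>
            have hre : N.Reach (fV d) w' := by rw [hfVd]; exact (hroute.1 w' hmx).1
            obtain ⟨d', hd', hrd'⟩ := lift_reach hf d hre
            refine ⟨Sum.inl d', ⟨by rw [hmx]; exact hd', fun _ _ => ⟨d', rfl⟩,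
                fun e he => absurd (hmx.symm.trans he) (fun hc => (by cases hc))⟩,
              Or.inr ⟨?_, inl_ne_py1 hL hslt hmx hd'⟩, ?_⟩
            · rw [hq1]
              show M.Reach d d'
              exact hrd'
            · intro q' hq'
              rw [hq2] at hq'
              obtain rfl : q = q' := Option.some.inj hq'
              exact ⟨fun h => absurd h hxA, fun h => absurd h hxB⟩
          | inr e' =>
            have htg : Relation.TransGen N.Adj (fV d) (N.head e') := by
              rw [hfVd]; exact hroute.2 e' hmx
            obtain ⟨b', hb'h, hb'r⟩ := lift_transGen hf d htg
            refine ⟨Sum.inr b', ⟨by rw [hmx]; exact hb'h,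
                fun w hw => absurd (hmx.symm.trans hw) (fun hc => (by cases hc)),
                fun _ _ => ⟨b', rfl⟩⟩, Or.inr ⟨?_, ?_⟩, ?_⟩
            · rw [hq1]
              show M.Reach d (M.tail b')
              exact hb'r
            · rw [hq1]; exact fun hc => (by cases hc)
            · intro q' hq'
              rw [hq2] at hq'
              obtain rfl : q = q' := Option.some.inj hq'
              exact ⟨fun h => absurd h hxA, fun h => absurd h hxB⟩
    · have hnone := hpy.2.2 hyspec
      cases hmx : μ x with
      | inl w' =>
        have hre : N.Reach (fV (M.hpt py.1)) w' := by rw [hL.1]; exact (hroute.1 w' hmx).1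
        obtain ⟨d', hd', hrd'⟩ := lift_reach hf (M.hpt py.1) hre
        exact ⟨Sum.inl d', ⟨by rw [hmx]; exact hd', fun _ _ => ⟨d', rfl⟩,
            fun e he => absurd (hmx.symm.trans he) (fun hc => (by cases hc))⟩,
          Or.inr ⟨hrd', inl_ne_py1 hL hslt hmx hd'⟩,
          fun q' hq' => absurd (hnone.symm.trans hq') (fun hc => (by cases hc))⟩
      | inr e' =>
        have htg : Relation.TransGen N.Adj (fV (M.hpt py.1)) (N.head e') := by
          rw [hL.1]; exact hroute.2 e' hmx
        obtain ⟨b', hb'h, hb'r⟩ := lift_transGen hf (M.hpt py.1) htg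
        exact ⟨Sum.inr b', ⟨by rw [hmx]; exact hb'h,
            fun w hw => absurd (hmx.symm.trans hw) (fun hc => (by cases hc)),
            fun _ _ => ⟨b', rfl⟩⟩,
          Or.inr ⟨hb'r, inr_ne_py1 hM.acyclic hb'r⟩,
          fun q' hq' => absurd (hnone.symm.trans hq') (fun hc => (by cases hc))⟩

end AuxLift

section Construction

variable {V E W F D U S : Type}
variable {T : MGraph V E} {lvT : Set V} {ρT : V} {t : V → Event} {σ : V → S}
variable {N : MGraph W F} {lvN : Set W} {ρN : W} {sp : S → W}
variable {M : MGraph D U} {lvM : Set D} {ρM : D} {χ : S → Set D}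
variable {fV : D → W} {fE : U → F} {μ : V → W ⊕ F}

/-- The optional speciation data stored at a vertex. -/
noncomputable def mkExtra (hT : IsGeneTree T lvT ρT σ) (hN : IsNetwork N lvN ρN)
    (hμ : IsTreeNetRecon T lvT t σ N sp μ) (hf : IsFoldingMap M lvM χ N sp fV fE)
    (x : V) (k : D ⊕ U) (hk : LiftP N M fV μ x k) : Option (V × V × U × U) :=
  @dite _ (x ∉ lvT ∧ t x = Event.spec) (Classical.propDecidable _)
    (fun h => some (exists_specData hT hN hμ hf x h.1 h.2 k hk).choose) (fun _ => none)

theorem mkExtra_some (hT : IsGeneTree T lvT ρT σ) (hN : IsNetwork N lvN ρN)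
    (hμ : IsTreeNetRecon T lvT t σ N sp μ) (hf : IsFoldingMap M lvM χ N sp fV fE)
    (x : V) (k : D ⊕ U) (hk : LiftP N M fV μ x k) (hx : x ∉ lvT) (hs : t x = Event.spec) :
    ∃ q : V × V × U × U, mkExtra hT hN hμ hf x k hk = some q ∧
    ∃ d, k = Sum.inl d ∧ T.Adj x q.1 ∧ T.Adj x q.2.1 ∧ q.1 ≠ q.2.1 ∧
      M.tail q.2.2.1 = d ∧ M.tail q.2.2.2 = d ∧ q.2.2.1 ≠ q.2.2.2 ∧
      N.Reach (fV (M.head q.2.2.1)) (N.hpt (μ q.1)) ∧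
      N.Reach (fV (M.head q.2.2.2)) (N.hpt (μ q.2.1)) := by
  unfold mkExtra
  rw [dif_pos ⟨hx, hs⟩]
  exact ⟨_, rfl, (exists_specData hT hN hμ hf x hx hs k hk).choose_spec⟩

theorem mkExtra_none (hT : IsGeneTree T lvT ρT σ) (hN : IsNetwork N lvN ρN)
    (hμ : IsTreeNetRecon T lvT t σ N sp μ) (hf : IsFoldingMap M lvM χ N sp fV fE)
    (x : V) (k : D ⊕ U) (hk : LiftP N M fV μ x k) (hn : ¬(x ∉ lvT ∧ t x = Event.spec)) :
    mkExtra hT hN hμ hf x k hk = none := by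
  unfold mkExtra
  rw [dif_neg hn]

/-- Pack a lift into a `GoodAt` package. -/
noncomputable def mkNode (hT : IsGeneTree T lvT ρT σ) (hN : IsNetwork N lvN ρN)
    (hμ : IsTreeNetRecon T lvT t σ N sp μ) (hf : IsFoldingMap M lvM χ N sp fV fE)
    (x : V) (k : D ⊕ U) (hk : LiftP N M fV μ x k) :
    {p : (D ⊕ U) × Option (V × V × U × U) // GoodAt T lvT t N M fV μ x p} :=
  ⟨(k, mkExtra hT hN hμ hf x k hk), hk,
    fun hx hs => mkExtra_some hT hN hμ hf x k hk hx hs,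
    fun hn => mkExtra_none hT hN hμ hf x k hk hn⟩

/-- The recursion body defining the lifting. -/
noncomputable def mkF (hT : IsGeneTree T lvT ρT σ) (hN : IsNetwork N lvN ρN)
    (hμ : IsTreeNetRecon T lvT t σ N sp μ) (hM : IsPMULTree M lvM ρM χ)
    (hf : IsFoldingMap M lvM χ N sp fV fE) :
    ∀ x : V, (∀ y : V, T.Adj y x → {p : (D ⊕ U) × Option (V × V × U × U) //
        GoodAt T lvT t N M fV μ y p}) →
      {p : (D ⊕ U) × Option (V × V × U × U) // GoodAt T lvT t N M fV μ x p} :=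
  fun x ih =>
    @dite _ (∃ e : E, T.head e = x) (Classical.propDecidable _)
      (fun h =>
        mkNode hT hN hμ hf x
          (exists_stepLift hT hN hμ hM hf (⟨h.choose, rfl, h.choose_spec⟩ :
              T.Adj (T.tail h.choose) x)
            (ih (T.tail h.choose) ⟨h.choose, rfl, h.choose_spec⟩).1
            (ih (T.tail h.choose) ⟨h.choose, rfl, h.choose_spec⟩).2).choose
          (exists_stepLift hT hN hμ hM hf (⟨h.choose, rfl, h.choose_spec⟩ :
              T.Adj (T.tail h.choose) x)
            (ih (T.tail h.choose) ⟨h.choose, rfl, h.choose_spec⟩).1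
            (ih (T.tail h.choose) ⟨h.choose, rfl, h.choose_spec⟩).2).choose_spec.1)
      (fun _ => mkNode hT hN hμ hf x (exists_baseLift hf μ x).choose
        (exists_baseLift hf μ x).choose_spec)

end Construction
/-- Let `(T;t,σ)` be an event-labeled gene tree, `N` a multi-arc
    free species network on `𝕊`, `μ` a TreeNet-reconciliation map from `(T;t,σ)`
    to `N`, and `(M,χ)` a pseudo MUL-tree that can be folded via a folding map
    `f = (fV,fE)` to `N`. Then there exists a MUL-reconciliation map from
    `(T;t,σ)` to `(M,χ)` (namely the lifting `κ_{μ,f}` of `μ` along `f`). -/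
theorem lifting_is_mul_recon {V E D U W F S : Type}
    (T : MGraph V E) (lvT : Set V) (ρT : V) (t : V → Event) (σ : V → S)
    (hT : IsGeneTree T lvT ρT σ)
    (N : MGraph W F) (lvN : Set W) (ρN : W) (sp : S → W)
    (hN : IsNetwork N lvN ρN) (hmf : N.MultiArcFree)
    (hsp : IsLeafLabeling N lvN sp)
    (μ : V → W ⊕ F) (hμ : IsTreeNetRecon T lvT t σ N sp μ)
    (M : MGraph D U) (lvM : Set D) (ρM : D) (χ : S → Set D)
    (hM : IsPMULTree M lvM ρM χ)
    (fV : D → W) (fE : U → F) (hf : IsFoldingMap M lvM χ N sp fV fE) :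
    ∃ κ : V → D ⊕ U, IsMULRecon T lvT t σ M lvM χ κ := by
  classical
  have wf : WellFounded T.Adj := MGraph.Acyclic.wf_adj hT.finV hT.acyclic
  set κF : ∀ x : V, {p : (D ⊕ U) × Option (V × V × U × U) // GoodAt T lvT t N M fV μ x p} :=
    WellFounded.fix wf (mkF hT hN hμ hM hf) with hκF
  -- the step relation between a vertex and its parent
  have hstep : ∀ x y : V, T.Adj y x → StepRelP M μ x y (κF x).1.1 (κF y).1 := by
    intro x y hadj
    obtain ⟨e0, he0t, he0h⟩ := hadj
    have hex : ∃ e : E, T.head e = x := ⟨e0, he0h⟩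
    have hyeq : y = T.tail hex.choose := by
      have h1 : e0 = hex.choose := in_arc_unique hT he0h hex.choose_spec
      rw [← h1]
      exact he0t.symm
    subst hyeq
    rw [hκF, WellFounded.fix_eq wf (mkF hT hN hμ hM hf) x]
    unfold mkF
    rw [dif_pos hex]
    exact (exists_stepLift hT hN hμ hM hf (⟨hex.choose, rfl, hex.choose_spec⟩ :
        T.Adj (T.tail hex.choose) x)
      (WellFounded.fix wf (mkF hT hN hμ hM hf) (T.tail hex.choose)).1
      (WellFounded.fix wf (mkF hT hN hμ hM hf) (T.tail hex.choose)).2).choose_spec.2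
  -- per-step order relations
  have hsle1 : ∀ x y : V, T.Adj y x → M.sle ((κF x).1.1) ((κF y).1.1) := by
    intro x y hadj
    rcases (hstep x y hadj).1 with ⟨-, hk⟩ | ⟨hr, hne⟩
    · exact Or.inl hk
    · exact Or.inr ((MGraph.slt_iff hM.acyclic).mpr ⟨hr, hne⟩)
  have hslt1 : ∀ x y : V, T.Adj y x →
      ¬(x ∉ lvT ∧ y ∉ lvT ∧ t x = Event.dupl ∧ t y = Event.dupl) →
      M.slt ((κF x).1.1) ((κF y).1.1) := by
    intro x y hadj hnb
    rcases (hstep x y hadj).1 with ⟨hμeq, -⟩ | ⟨hr, hne⟩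
    · exfalso
      have hs := hμ.R3s x y (vlt_of_adj hT.acyclic hadj) hnb
      rw [hμeq] at hs
      exact MGraph.slt_irrefl hN.acyclic _ hs
    · exact (MGraph.slt_iff hM.acyclic).mpr ⟨hr, hne⟩
  -- chain lemmas
  have hsleT : ∀ {y x : V}, Relation.TransGen T.Adj y x →
      M.sle ((κF x).1.1) ((κF y).1.1) := by
    intro y x h
    induction h with
    | single h1 => exact hsle1 _ _ h1
    | tail h1 h2 ih => exact MGraph.sle_trans hM.acyclic (hsle1 _ _ h2) ih
  have hsleR : ∀ {y x : V}, Relation.ReflTransGen T.Adj y x →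
      M.sle ((κF x).1.1) ((κF y).1.1) := by
    intro y x h
    rcases Relation.reflTransGen_iff_eq_or_transGen.mp h with rfl | ht
    · exact Or.inl rfl
    · exact hsleT ht
  have hvlt_tg : ∀ {x y : V}, T.vlt x y → Relation.TransGen T.Adj y x := by
    rintro x y ⟨hr, hne⟩
    rcases Relation.reflTransGen_iff_eq_or_transGen.mp hr with heq | ht
    · exact absurd heq hne
    · exact ht
  -- leaves
  have hleaf : ∀ x ∈ lvT, ∃ d, (κF x).1.1 = Sum.inl d ∧ d ∈ lvM ∧ d ∈ χ (σ x) := by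
    intro x hx
    have hLx : LiftP N M fV μ x ((κF x).1.1) := (κF x).2.1
    have hμx : μ x = Sum.inl (sp (σ x)) := hμ.R1 x hx
    obtain ⟨d, hd⟩ := hLx.2.1 _ hμx
    have hfd : fV d = sp (σ x) := by
      have h1 := hLx.1
      rw [hd, hμx] at h1
      exact h1
    haveI := hM.finU
    haveI := hN.finE
    have hNleaf : fV d ∈ lvN := by rw [hfd]; exact hsp.mem (σ x)
    have hout0 : M.outDeg d = 0 := by
      by_contra h0
      obtain ⟨⟨⟨b, hb⟩⟩, -⟩ := Nat.card_ne_zero.mp h0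
      have hNe : N.outDeg (fV d) ≠ 0 := by
        apply Nat.card_ne_zero.mpr
        exact ⟨⟨⟨fE b, by rw [hf.F1t, hb]⟩⟩, inferInstance⟩
      exact hNe ((hN.leaf_iff _).mp hNleaf).1
    have hdl : d ∈ lvM := by
      by_contra hdl
      by_cases hdρ : d = ρM
      · have h1 := hM.root_out
        rw [← hdρ, hout0] at h1
        exact absurd h1 (by omega)
      · have h1 := (hM.inner_deg d hdl hdρ).2
        rw [hout0] at h1
        omega
    refine ⟨d, hd, hdl, ?_⟩
    obtain ⟨s', hs'⟩ := hM.chi_cover d hdl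
    have h2 : fV d = sp s' := hf.F2 d hdl s' hs'
    have hss : s' = σ x := hsp.inj (by rw [← h2, hfd])
    rw [← hss]
    exact hs'
  refine ⟨fun x => (κF x).1.1, ?_, ?_, ?_, ?_, ?_, ?_⟩
  -- M0
  · intro x d hxd hD
    obtain ⟨hin1, hout1⟩ := hD
    by_cases hx : x ∈ lvT
    · obtain ⟨d', hd', hdl, -⟩ := hleaf x hx
      rw [hxd] at hd'
      obtain rfl : d = d' := Sum.inl.inj hd'
      have h0 := ((hM.leaf_iff _).mp hdl).1
      rw [h0] at hout1
      exact absurd hout1 (by omega)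
    · cases htx : t x with
      | dupl =>
        obtain ⟨e, he⟩ := hμ.R2ii x hx htx
        obtain ⟨b, hb⟩ := ((κF x).2.1).2.2 e he
        rw [hxd] at hb
        exact (by cases hb)
      | spec =>
        obtain ⟨q, hq2, d₀, hq1, -, -, -, htA, htB, hbne, -, -⟩ := (κF x).2.2.1 hx htx
        rw [hxd] at hq1
        obtain rfl : d = d₀ := Sum.inl.inj hq1
        haveI := hM.finU
        exact card_ne_one_of_pair
          (a := (⟨q.2.2.1, htA⟩ : {b : U // M.tail b = d}))
          (b := ⟨q.2.2.2, htB⟩)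
          (fun h => hbne (congrArg Subtype.val h)) hout1
  -- M1
  · intro x hx
    obtain ⟨d, hd, hdl, hdχ⟩ := hleaf x hx
    exact ⟨d, hd, hdl, hdχ⟩
  -- M2i
  · intro x hx hsx
    obtain ⟨q, hq2, d, hq1, hA, hB, hABne, htA, htB, hbne, -, -⟩ := (κF x).2.2.1 hx hsx
    haveI := hM.finU
    have hdnl : d ∉ lvM := by
      intro hdl
      have h0 := ((hM.leaf_iff _).mp hdl).1
      have hNe : M.outDeg d ≠ 0 :=
        Nat.card_ne_zero.mpr ⟨⟨⟨q.2.2.1, htA⟩⟩, inferInstance⟩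
      exact hNe h0
    have hinc : ∀ b₁ b₂ : U, M.tail b₁ = M.tail b₂ → b₁ ≠ b₂ →
        ¬ M.sle (Sum.inr b₁ : D ⊕ U) (Sum.inr b₂) := by
      intro b₁ b₂ hteq hne hle
      rcases hle with heq | hlt
      · exact hne (Sum.inr.inj heq)
      · have h2 : M.Reach (M.head b₂) (M.tail b₁) := hlt.2.1
        rw [hteq] at h2
        exact hM.acyclic.no_loop h2 ⟨b₂, rfl, rfl⟩
    have hs1 := (hstep q.1 x hA).2 q hq2
    have hs2 := (hstep q.2.1 x hB).2 q hq2
    exact ⟨d, hq1, hdnl, q.1, q.2.1, hA, hB, hABne, q.2.2.1, q.2.2.2, htA, htB,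
      hs1.1 rfl, hs2.2 rfl,
      hinc q.2.2.1 q.2.2.2 (htA.trans htB.symm) hbne,
      hinc q.2.2.2 q.2.2.1 (htB.trans htA.symm) (fun h => hbne h.symm)⟩
  -- M2ii
  · intro x hx htx
    obtain ⟨e, he⟩ := hμ.R2ii x hx htx
    exact ((κF x).2.1).2.2 e he
  -- M3d
  · intro x y hv _ _ _ _
    exact hsleT (hvlt_tg hv)
  -- M3s
  · intro x y hv hnb
    have ht := hvlt_tg hv
    by_cases hxd : x ∉ lvT ∧ t x = Event.dupl
    · have hyf : y ∈ lvT ∨ t y ≠ Event.dupl := by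
        by_contra hc
        push_neg at hc
        exact hnb ⟨hxd.1, hc.1, hxd.2, hc.2⟩
      obtain ⟨c, h1, h2⟩ := Relation.TransGen.head'_iff.mp ht
      have hstep1 : M.slt ((κF c).1.1) ((κF y).1.1) := by
        refine hslt1 c y h1 (fun hb => ?_)
        rcases hyf with h | h
        · exact hb.2.1 h
        · exact h hb.2.2.2
      exact MGraph.slt_of_sle_of_slt hM.acyclic (hsleR h2) hstep1
    · have hxf : x ∈ lvT ∨ t x ≠ Event.dupl := by
        rcases not_and_or.mp hxd with h | h
        · exact Or.inl (not_not.mp h)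
        · exact Or.inr h
      obtain ⟨b, h1, h2⟩ := Relation.TransGen.tail'_iff.mp ht
      have hstep1 : M.slt ((κF x).1.1) ((κF b).1.1) := by
        refine hslt1 x b h2 (fun hb => ?_)
        rcases hxf with h | h
        · exact hb.1 h
        · exact h hb.2.2.1
      exact MGraph.slt_of_slt_of_sle hM.acyclic hstep1 (hsleR h1)

end Phylo
end
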